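/- arXiv:1811.07449 — 4 statements merged into one kernel-verified Lean document; each statement's English description precedes it below -/
import Mathlib

section
/- For every integer m ≥ 3, n_p({2,m};3) = m+1, and every planar ({2,m};3)-graph on m+1 vertices is isomorphic either to the pinwheel P_m, or, when m is even, to the windmill T_{m/2}; these are the only planar ({2,m};3)-cages. -/
open SimpleGraph

/-- `H` is a minor of `G`: there is an assignment of pairwise disjoint connected
branch sets in `G` to the vertices of `H`, with an edge of `G` between the branch
sets of any two adjacent vertices of `H`. -/
def SimpleGraph.IsMinorOf {W V : Type*} (H : SimpleGraph W) (G : SimpleGraph V) : Prop :=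
  ∃ f : W → Set V,
    (∀ w, (G.induce (f w)).Connected) ∧
    (Pairwise fun w₁ w₂ => Disjoint (f w₁) (f w₂)) ∧
    ∀ ⦃w₁ w₂⦄, H.Adj w₁ w₂ → ∃ v₁ ∈ f w₁, ∃ v₂ ∈ f w₂, G.Adj v₁ v₂

/-- A graph is planar iff it has no `K₅` minor and no `K₃,₃` minor (Wagner's theorem). -/
def SimpleGraph.IsPlanar {V : Type*} (G : SimpleGraph V) : Prop :=
  ¬ (completeGraph (Fin 5)).IsMinorOf G ∧
    ¬ (completeBipartiteGraph (Fin 3) (Fin 3)).IsMinorOf G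

/-- A graph is outerplanar iff it has no `K₄` minor and no `K₂,₃` minor. -/
def SimpleGraph.IsOuterplanar {V : Type*} (G : SimpleGraph V) : Prop :=
  ¬ (completeGraph (Fin 4)).IsMinorOf G ∧
    ¬ (completeBipartiteGraph (Fin 2) (Fin 3)).IsMinorOf G

/-- The degree of a vertex, as the cardinality of its neighbour set. -/
noncomputable def SimpleGraph.degN {V : Type*} (G : SimpleGraph V) (v : V) : ℕ :=
  (G.neighborSet v).ncard

/-- An `({r,m};g)`-graph: girth `g`, every vertex has degree `r` or `m`, both occur. -/
def IsBigirthGraph {V : Type*} (G : SimpleGraph V) (r m g : ℕ) : Prop :=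
  G.girth = g ∧ (∀ v, G.degN v = r ∨ G.degN v = m) ∧
    (∃ v, G.degN v = r) ∧ (∃ v, G.degN v = m)

/-- The set of orders of finite planar `({r,m};g)`-graphs. -/
def bicageOrders (r m g : ℕ) : Set ℕ :=
  {n | ∃ (V : Type) (_ : Fintype V) (G : SimpleGraph V),
    G.IsPlanar ∧ IsBigirthGraph G r m g ∧ Fintype.card V = n}

/-- The pinwheel `P_m`: `m−1` triangles sharing the common edge `{0,1}`;
vertices `0` and `1` have degree `m`, other vertices have degree `2`. -/
def pinwheel (m : ℕ) : SimpleGraph (Fin (m + 1)) :=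
  SimpleGraph.fromRel (fun a _ => a.val = 0 ∨ a.val = 1)

/-- The windmill `T_l`: `l` triangles sharing the common vertex `0`;
vertex `0` has degree `2l`, other vertices have degree `2`. -/
def windmill (l : ℕ) : SimpleGraph (Fin (2 * l + 1)) :=
  SimpleGraph.fromRel (fun a b => a.val = 0 ∨ (a.val % 2 = 1 ∧ b.val = a.val + 1))

/-! ### Auxiliary lemmas -/

lemma girth_eq_three_of_triangle {V : Type*} {G : SimpleGraph V} {a b c : V}
    (hab : G.Adj a b) (hbc : G.Adj b c) (hca : G.Adj c a) : G.girth = 3 := by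
  have hcyc : (Walk.cons hab (Walk.cons hbc (Walk.cons hca Walk.nil))).IsCycle := by
    simp [Walk.isCycle_def, Walk.isTrail_def, hab.ne, hbc.ne, hca.ne, hab.ne',
      hbc.ne', hca.ne', Sym2.eq, Sym2.rel_iff']
  have hle : G.egirth ≤ 3 := by
    calc G.egirth ≤ ((Walk.cons hab (Walk.cons hbc (Walk.cons hca Walk.nil))).length : ℕ∞) := by
          rw [SimpleGraph.egirth]
          exact iInf_le_of_le a (iInf_le_of_le _ (iInf_le_of_le hcyc le_rfl))
      _ = 3 := by simp
  have hge : (3:ℕ∞) ≤ G.egirth := three_le_egirth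
  have : G.egirth = 3 := le_antisymm hle hge
  simp [SimpleGraph.girth, this]

/-- If every edge of `G` touches `x0` or `x1`, then any minor `H` of `G` has a
two-element "cover": all edges of `H` touch one of two vertices. -/
lemma cover_of_minor {W V : Type*} [Nonempty W] {H : SimpleGraph W} {G : SimpleGraph V}
    {x0 x1 : V} (hcov : ∀ ⦃a b : V⦄, G.Adj a b → a = x0 ∨ a = x1 ∨ b = x0 ∨ b = x1)
    (hmin : H.IsMinorOf G) :
    ∃ w₀ w₁ : W, ∀ ⦃a b : W⦄, H.Adj a b → a = w₀ ∨ a = w₁ ∨ b = w₀ ∨ b = w₁ := by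
  obtain ⟨f, -, hdisj, hadj⟩ := hmin
  classical
  let w₀ : W := if h : ∃ w, x0 ∈ f w then h.choose else Classical.arbitrary W
  let w₁ : W := if h : ∃ w, x1 ∈ f w then h.choose else Classical.arbitrary W
  refine ⟨w₀, w₁, fun a b hab => ?_⟩
  obtain ⟨v₁, hv₁, v₂, hv₂, he⟩ := hadj hab
  have key : ∀ (w : W) (v : V), v ∈ f w → v = x0 → w = w₀ := by
    intro w v hv hvx
    have hv' : x0 ∈ f w := hvx ▸ hv
    have hex : ∃ w, x0 ∈ f w := ⟨w, hv'⟩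
    by_contra hne
    have hmem : x0 ∈ f w₀ := by
      simp only [w₀, dif_pos hex]; exact hex.choose_spec
    exact Set.disjoint_left.mp (hdisj hne) hv' hmem
  have key1 : ∀ (w : W) (v : V), v ∈ f w → v = x1 → w = w₁ := by
    intro w v hv hvx
    have hv' : x1 ∈ f w := hvx ▸ hv
    have hex : ∃ w, x1 ∈ f w := ⟨w, hv'⟩
    by_contra hne
    have hmem : x1 ∈ f w₁ := by
      simp only [w₁, dif_pos hex]; exact hex.choose_spec
    exact Set.disjoint_left.mp (hdisj hne) hv' hmem
  rcases hcov he with h | h | h | h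
  · exact Or.inl (key a v₁ hv₁ h)
  · exact Or.inr (Or.inl (key1 a v₁ hv₁ h))
  · exact Or.inr (Or.inr (Or.inl (key b v₂ hv₂ h)))
  · exact Or.inr (Or.inr (Or.inr (key1 b v₂ hv₂ h)))

/-- Any graph whose every edge touches one of two fixed vertices is planar. -/
lemma isPlanar_of_cover {V : Type*} {G : SimpleGraph V} {x0 x1 : V}
    (hcov : ∀ ⦃a b : V⦄, G.Adj a b → a = x0 ∨ a = x1 ∨ b = x0 ∨ b = x1) :
    G.IsPlanar := by
  constructor
  · intro hmin
    obtain ⟨w₀, w₁, hW⟩ := cover_of_minor hcov hmin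
    have key : ∀ x y : Fin 5, ∃ a b : Fin 5, a ≠ b ∧ a ≠ x ∧ a ≠ y ∧ b ≠ x ∧ b ≠ y := by decide
    have := key w₀ w₁
    obtain ⟨a, b, hab, h1, h2, h3, h4⟩ := this
    have : (completeGraph (Fin 5)).Adj a b := hab
    rcases hW this with h | h | h | h <;> simp_all
  · intro hmin
    obtain ⟨w₀, w₁, hW⟩ := cover_of_minor hcov hmin
    have key : ∀ x y : Fin 3 ⊕ Fin 3, ∃ a b : Fin 3, (Sum.inl a : Fin 3 ⊕ Fin 3) ≠ x ∧
        Sum.inl a ≠ y ∧ (Sum.inr b : Fin 3 ⊕ Fin 3) ≠ x ∧ Sum.inr b ≠ y := by decide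
    have := key w₀ w₁
    obtain ⟨a, b, h1, h2, h3, h4⟩ := this
    have : (completeBipartiteGraph (Fin 3) (Fin 3)).Adj (Sum.inl a) (Sum.inr b) := by simp
    rcases hW this with h | h | h | h <;> simp_all

lemma pinwheel_adj {m : ℕ} {a b : Fin (m+1)} :
    (pinwheel m).Adj a b ↔ a ≠ b ∧ (a.val = 0 ∨ a.val = 1 ∨ b.val = 0 ∨ b.val = 1) := by
  simp only [pinwheel, fromRel_adj]; tauto

lemma pinwheel_deg_univ {m : ℕ} (v : Fin (m+1)) (hv : v.val = 0 ∨ v.val = 1) :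
    (pinwheel m).degN v = m := by
  have : (pinwheel m).neighborSet v = {v}ᶜ := by
    ext y
    simp only [mem_neighborSet, pinwheel_adj, Set.mem_compl_iff, Set.mem_singleton_iff]
    constructor
    · rintro ⟨h, -⟩ hy; exact h hy.symm
    · intro hy; exact ⟨fun hh => hy hh.symm, by tauto⟩
  rw [SimpleGraph.degN, this, Set.ncard_eq_toFinset_card']
  simp [Finset.card_compl]

lemma pinwheel_deg_two {m : ℕ} (hm : 3 ≤ m) (v : Fin (m+1)) (hv : 2 ≤ v.val) :
    (pinwheel m).degN v = 2 := by
  have h1 : ((1:Fin (m+1)) : ℕ) = 1 := by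
    simp [Fin.val_one']; omega
  have : (pinwheel m).neighborSet v = {0, 1} := by
    ext y
    simp only [mem_neighborSet, pinwheel_adj, Set.mem_insert_iff, Set.mem_singleton_iff,
      Fin.ext_iff, Fin.val_zero, h1]
    omega
  rw [SimpleGraph.degN, this]
  rw [Set.ncard_pair (by simp [Fin.ext_iff, h1]; omega)]

lemma windmill_adj {l : ℕ} {a b : Fin (2*l+1)} :
    (windmill l).Adj a b ↔ a ≠ b ∧ (a.val = 0 ∨ b.val = 0 ∨
      (a.val % 2 = 1 ∧ b.val = a.val + 1) ∨ (b.val % 2 = 1 ∧ a.val = b.val + 1)) := by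
  simp only [windmill, fromRel_adj]; tauto

lemma iso_pinwheel {V : Type} [Fintype V] [DecidableEq V] {G : SimpleGraph V} {m : ℕ}
    (hm : 3 ≤ m) (hcard : Fintype.card V = m + 1) (v w : V) (hvw : v ≠ w)
    (hadj : ∀ a b, G.Adj a b ↔ a ≠ b ∧ (a = v ∨ a = w ∨ b = v ∨ b = w)) :
    Nonempty (G ≃g pinwheel m) := by
  have h01 : (0 : Fin (m+1)) ≠ 1 := by
    simp [Fin.ext_iff, Fin.val_one']; omega
  have h1v : ((1 : Fin (m+1)) : ℕ) = 1 := by simp [Fin.val_one']; omega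
  let e0 : V ≃ Fin (m+1) := Fintype.equivFinOfCardEq hcard
  let e1 : V ≃ Fin (m+1) := e0.trans (Equiv.swap (e0 v) 0)
  let e : V ≃ Fin (m+1) := e1.trans (Equiv.swap (e1 w) 1)
  have hev1 : e1 v = 0 := by simp [e1]
  have hew : e w = 1 := by simp [e]
  have hev : e v = 0 := by
    have h1 : e1 w ≠ 0 := by
      rw [← hev1]; exact fun h => hvw (e1.injective h.symm)
    simp only [e, Equiv.trans_apply, hev1]
    rw [Equiv.swap_apply_of_ne_of_ne h1.symm h01]
  refine ⟨⟨e, ?_⟩⟩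
  intro a b
  simp only [Equiv.coe_fn_mk, pinwheel_adj, hadj]
  have hinj := e.injective
  constructor
  · rintro ⟨hne, h⟩
    refine ⟨fun hh => hne (by rw [hh]), ?_⟩
    rcases h with h | h | h | h
    · left; apply hinj; rw [hev]; exact Fin.ext h
    · right; left; apply hinj; rw [hew]; exact Fin.ext (by rw [h, h1v])
    · right; right; left; apply hinj; rw [hev]; exact Fin.ext h
    · right; right; right; apply hinj; rw [hew]; exact Fin.ext (by rw [h, h1v])
  · rintro ⟨hne, h⟩
    refine ⟨fun hh => hne (hinj hh), ?_⟩
    rcases h with rfl | rfl | rfl | rfl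
    · left; rw [hev]; rfl
    · right; left; rw [hew, h1v]
    · right; right; left; rw [hev]; rfl
    · right; right; right; rw [hew, h1v]

lemma iso_windmill {V : Type} [Fintype V] [DecidableEq V] {G : SimpleGraph V} {m : ℕ}
    (hcard : Fintype.card V = m + 1) (v : V)
    (σ : {x : V // x ≠ v} → {x : V // x ≠ v}) (hinv : Function.Involutive σ)
    (hσne : ∀ u, σ u ≠ u)
    (hadj : ∀ a b : V, G.Adj a b ↔ a ≠ b ∧ (a = v ∨ b = v ∨
      ∃ (ha : a ≠ v) (hb : b ≠ v), σ ⟨a, ha⟩ = ⟨b, hb⟩)) :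
    ∃ l, m = 2 * l ∧ Nonempty (G ≃g windmill l) := by
  classical
  let s : Setoid {x : V // x ≠ v} := ⟨fun x y => x = y ∨ σ x = y, by
    constructor
    · exact fun x => Or.inl rfl
    · rintro x y (rfl | h)
      · exact Or.inl rfl
      · exact Or.inr (by rw [← h, hinv])
    · rintro x y z (rfl | h) (rfl | h')
      · exact Or.inl rfl
      · exact Or.inr h'
      · exact Or.inr h
      · refine Or.inl ?_
        rw [← h', ← h, hinv x] ⟩
  let Q := Quotient s
  haveI : Fintype Q := Fintype.ofFinite Q
  let g : Q × Bool → {x : V // x ≠ v} := fun p => if p.2 then σ p.1.out else p.1.out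
  have hgmk : ∀ (c : Q) (b : Bool), Quotient.mk s (g (c, b)) = c := by
    intro c b
    cases b
    · show Quotient.mk s c.out = c
      exact c.out_eq
    · show Quotient.mk s (σ c.out) = c
      have h2 : Quotient.mk s (σ c.out) = Quotient.mk s c.out :=
        Quotient.sound (Or.inr (hinv c.out))
      rw [h2]; exact c.out_eq
  have hgσ : ∀ (c : Q) (b : Bool), σ (g (c, b)) = g (c, !b) := by
    intro c b; cases b <;> simp [g, hinv c.out]
  have ginj : Function.Injective g := by
    rintro ⟨c, b⟩ ⟨c', b'⟩ h
    have hc : c = c' := by rw [← hgmk c b, ← hgmk c' b', h]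
    subst hc
    have hb : b = b' := by
      by_contra hbb
      have hb' : b' = !b := by cases b <;> cases b' <;> simp_all
      rw [hb'] at h
      exact hσne (g (c, b)) ((hgσ c b).trans h.symm)
    rw [hb]
  have gsurj : Function.Surjective g := by
    intro u
    have := Quotient.exact ((Quotient.mk s u).out_eq)
    rcases this with h | h
    · exact ⟨(Quotient.mk s u, false), h⟩
    · exact ⟨(Quotient.mk s u, true), h⟩
  have hcardP : Fintype.card {x : V // x ≠ v} = m := by
    have := Fintype.card_subtype_compl (fun x : V => x = v)
    rw [hcard, Fintype.card_subtype_eq] at this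
    simpa using this
  have hml : m = 2 * Fintype.card Q := by
    have h1 : Fintype.card (Q × Bool) = Fintype.card {x : V // x ≠ v} :=
      Fintype.card_of_bijective ⟨ginj, gsurj⟩
    simp only [Fintype.card_prod, Fintype.card_bool, hcardP] at h1
    omega
  set l := Fintype.card Q with hlQ
  refine ⟨l, hml, ?_⟩
  have hcard' : Fintype.card V = 2 * l + 1 := by rw [hcard, hml]
  let eQ : Q ≃ Fin l := Fintype.equivFinOfCardEq rfl
  let Ffun : Fin (2*l+1) → V := fun i =>
    if h : i.val = 0 then v
    else (g (eQ.symm ⟨(i.val - 1)/2, by omega⟩, decide ((i.val - 1) % 2 = 1))).val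
  have hF0 : ∀ i : Fin (2*l+1), i.val = 0 → Ffun i = v := by
    intro i h; exact dif_pos h
  have hFne : ∀ (i : Fin (2*l+1)) (h : ¬ i.val = 0),
      Ffun i = (g (eQ.symm ⟨(i.val - 1)/2, by omega⟩, decide ((i.val - 1) % 2 = 1))).val := by
    intro i h; exact dif_neg h
  have hFnev : ∀ (i : Fin (2*l+1)), ¬ i.val = 0 → Ffun i ≠ v := by
    intro i h
    rw [hFne i h]
    exact (g _).2
  have hFinj : Function.Injective Ffun := by
    intro i j hij
    by_cases hi : i.val = 0 <;> by_cases hj : j.val = 0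
    · exact Fin.ext (by omega)
    · exact absurd (hF0 i hi ▸ hij).symm (hFnev j hj)
    · exact absurd (hF0 j hj ▸ hij) (hFnev i hi)
    · rw [hFne i hi, hFne j hj] at hij
      have := ginj (Subtype.ext hij)
      have h1 : (⟨(i.val - 1)/2, by omega⟩ : Fin l) = ⟨(j.val - 1)/2, by omega⟩ :=
        eQ.symm.injective (congrArg Prod.fst this)
      have h2 : decide ((i.val - 1) % 2 = 1) = decide ((j.val - 1) % 2 = 1) :=
        congrArg Prod.snd this
      rw [Fin.mk.injEq] at h1
      rw [decide_eq_decide] at h2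
      exact Fin.ext (by omega)
  have hFbij : Function.Bijective Ffun :=
    (Fintype.bijective_iff_injective_and_card Ffun).2 ⟨hFinj, by simp [hcard']⟩
  let F : Fin (2*l+1) ≃ V := Equiv.ofBijective Ffun hFbij
  refine ⟨(SimpleGraph.Iso.symm ⟨F, ?_⟩ : G ≃g windmill l)⟩
  intro a b
  show G.Adj (Ffun a) (Ffun b) ↔ (windmill l).Adj a b
  rw [hadj, windmill_adj]
  by_cases ha : a.val = 0 <;> by_cases hb : b.val = 0
  · have hab : a = b := Fin.ext (by omega)
    subst hab
    simp
  · rw [hF0 a ha]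
    have h2 := hFnev b hb
    constructor
    · intro; exact ⟨fun h => (by omega : a.val ≠ b.val) (congrArg Fin.val h), Or.inl ha⟩
    · intro; exact ⟨fun h => h2 h.symm, Or.inl rfl⟩
  · rw [hF0 b hb]
    have h2 := hFnev a ha
    constructor
    · intro; exact ⟨fun h => (by omega : a.val ≠ b.val) (congrArg Fin.val h), Or.inr (Or.inl hb)⟩
    · intro; exact ⟨h2, Or.inr (Or.inl rfl)⟩
  · rw [hFne a ha, hFne b hb]
    set pa := g (eQ.symm ⟨(a.val - 1)/2, by omega⟩, decide ((a.val - 1) % 2 = 1)) with hpa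
    set pb := g (eQ.symm ⟨(b.val - 1)/2, by omega⟩, decide ((b.val - 1) % 2 = 1)) with hpb
    have lhs_iff : (pa.val ≠ pb.val ∧ (pa.val = v ∨ pb.val = v ∨
        ∃ (h1 : pa.val ≠ v) (h2 : pb.val ≠ v), σ ⟨pa.val, h1⟩ = ⟨pb.val, h2⟩)) ↔ σ pa = pb := by
      constructor
      · rintro ⟨hne', (h | h | ⟨h1, h2, h⟩)⟩
        · exact absurd h pa.2
        · exact absurd h pb.2
        · simpa using h
      · intro h
        refine ⟨fun hh => hσne pa (h.trans (Subtype.ext hh).symm),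
          Or.inr (Or.inr ⟨pa.2, pb.2, by simpa using h⟩)⟩
    rw [lhs_iff]
    have hσpa : σ pa = g (eQ.symm ⟨(a.val - 1)/2, by omega⟩, !decide ((a.val - 1) % 2 = 1)) :=
      hgσ _ _
    rw [hσpa]
    constructor
    · intro h
      have := ginj (h.trans hpb)
      have h1 : ((a.val - 1)/2 : ℕ) = (b.val - 1)/2 := by
        have := eQ.symm.injective (congrArg Prod.fst this)
        simpa [Fin.mk.injEq] using this
      have h2 : (!decide ((a.val - 1) % 2 = 1)) = decide ((b.val - 1) % 2 = 1) :=
        congrArg Prod.snd this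
      rw [← decide_not, decide_eq_decide] at h2
      refine ⟨fun hh => ?_, ?_⟩
      · have : a.val = b.val := congrArg Fin.val hh
        omega
      · have hlt := a.isLt; have hltb := b.isLt
        omega
    · rintro ⟨hne', h⟩
      have hne'' : a.val ≠ b.val := fun hh => hne' (Fin.ext hh)
      have h1 : ((a.val - 1)/2 : ℕ) = (b.val - 1)/2 := by
        have hlt := a.isLt; have hltb := b.isLt
        omega
      have h2 : (¬ ((a.val - 1) % 2 = 1)) ↔ ((b.val - 1) % 2 = 1) := by
        have hlt := a.isLt; have hltb := b.isLt
        omega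
      have hfst : (eQ.symm ⟨(a.val - 1)/2, by omega⟩ : Q) = eQ.symm ⟨(b.val - 1)/2, by omega⟩ :=
        congrArg _ (Fin.ext h1)
      have hsnd : (!decide ((a.val - 1) % 2 = 1)) = decide ((b.val - 1) % 2 = 1) := by
        rw [← decide_not, decide_eq_decide]
        exact h2
      exact (congrArg g (Prod.ext hfst hsnd)).trans hpb.symm

/-- For `m ≥ 3`, `n_p({2,m};3) = m+1`, and every planar `({2,m};3)`-graph
on `m+1` vertices is isomorphic to the pinwheel `P_m` or, when `m` is even, to the
windmill `T_{m/2}`; these are the only planar `({2,m};3)`-cages. -/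
theorem planar_two_m_three_cages (m : ℕ) (hm : 3 ≤ m) :
    IsLeast (bicageOrders 2 m 3) (m + 1) ∧
    ∀ (V : Type) [Fintype V] (G : SimpleGraph V),
      G.IsPlanar → IsBigirthGraph G 2 m 3 → Fintype.card V = m + 1 →
      Nonempty (G ≃g pinwheel m) ∨ ∃ l, m = 2 * l ∧ Nonempty (G ≃g windmill l) := by
  classical
  have h1v : ((1 : Fin (m+1)) : ℕ) = 1 := by simp [Fin.val_one']; omega
  constructor
  · constructor
    · -- membership: the pinwheel is a planar ({2,m};3)-graph on m+1 vertices
      refine ⟨Fin (m+1), inferInstance, pinwheel m, ?_, ?_, by simp⟩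
      · apply isPlanar_of_cover (x0 := (0 : Fin (m+1))) (x1 := 1)
        intro a b hab
        rcases (pinwheel_adj.mp hab).2 with h | h | h | h
        · exact Or.inl (Fin.ext (by rw [h]; rfl))
        · exact Or.inr (Or.inl (Fin.ext (by rw [h, h1v])))
        · exact Or.inr (Or.inr (Or.inl (Fin.ext (by rw [h]; rfl))))
        · exact Or.inr (Or.inr (Or.inr (Fin.ext (by rw [h, h1v]))))
      · refine ⟨?_, ?_, ⟨⟨2, by omega⟩, pinwheel_deg_two hm _ (by simp)⟩,
          ⟨0, pinwheel_deg_univ 0 (Or.inl rfl)⟩⟩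
        · have h01 : (pinwheel m).Adj 0 1 := by
            rw [pinwheel_adj]
            exact ⟨by simp only [Ne, Fin.ext_iff, h1v, Fin.val_zero]; omega, Or.inl rfl⟩
          have h12 : (pinwheel m).Adj 1 ⟨2, by omega⟩ := by
            rw [pinwheel_adj]
            exact ⟨by simp only [Ne, Fin.ext_iff, h1v]; omega, Or.inr (Or.inl h1v)⟩
          have h20 : (pinwheel m).Adj ⟨2, by omega⟩ 0 := by
            rw [pinwheel_adj]
            exact ⟨by simp [Fin.ext_iff], Or.inr (Or.inr (Or.inl rfl))⟩
          exact girth_eq_three_of_triangle h01 h12 h20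
        · intro x
          by_cases hx : 2 ≤ x.val
          · exact Or.inl (pinwheel_deg_two hm x hx)
          · exact Or.inr (pinwheel_deg_univ x (by omega))
    · -- lower bound
      rintro n ⟨V, hfin, G, hplanar, ⟨hg, hdeg, hr, ⟨v, hv⟩⟩, hcard⟩
      have hsub : G.neighborSet v ⊆ {v}ᶜ := fun y hy => by
        simp only [Set.mem_compl_iff, Set.mem_singleton_iff]
        exact fun h => G.irrefl (h ▸ hy)
      have hle : (G.neighborSet v).ncard ≤ ({v}ᶜ : Set V).ncard :=
        Set.ncard_le_ncard hsub (Set.toFinite _)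
      have hcompl : ({v}ᶜ : Set V).ncard = n - 1 := by
        rw [Set.ncard_eq_toFinset_card']
        simp [Finset.card_compl, hcard]
      rw [SimpleGraph.degN] at hv
      have hn1 : 1 ≤ n := by
        rw [← hcard]
        exact Fintype.card_pos_iff.mpr ⟨v⟩
      omega
  · -- classification
    intro V _ G hplanar ⟨hg, hdeg, ⟨x2, hx2⟩, ⟨v, hv⟩⟩ hcard
    have hm2 : (2:ℕ) ≠ m := by omega
    -- vertices of degree m are universal
    have hNm : ∀ x, G.degN x = m → G.neighborSet x = {x}ᶜ := by
      intro x hx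
      rw [SimpleGraph.degN] at hx
      have hsub : G.neighborSet x ⊆ {x}ᶜ := fun y hy => by
        simp only [Set.mem_compl_iff, Set.mem_singleton_iff]
        exact fun h => G.irrefl (h ▸ hy)
      have hcompl : ({x}ᶜ : Set V).ncard = m := by
        rw [Set.ncard_eq_toFinset_card']
        simp [Finset.card_compl, hcard]
      exact Set.eq_of_subset_of_ncard_le hsub (le_of_eq (hcompl.trans hx.symm)) (Set.toFinite _)
    have huniv : ∀ x, G.degN x = m → ∀ y, y ≠ x → G.Adj x y := by
      intro x hx y hy
      have : y ∈ G.neighborSet x := by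
        rw [hNm x hx]
        simpa using hy
      exact this
    by_cases hw : ∃ w, w ≠ v ∧ G.degN w = m
    · -- pinwheel case
      obtain ⟨w, hwv, hwm⟩ := hw
      left
      have hall2 : ∀ u, u ≠ v → u ≠ w → G.degN u = 2 := by
        intro u h1 h2
        rcases hdeg u with h | h
        · exact h
        · exfalso
          have hx2v : x2 ≠ v := fun hh => by rw [hh, hv] at hx2; exact hm2 hx2.symm
          have hx2w : x2 ≠ w := fun hh => by rw [hh, hwm] at hx2; exact hm2 hx2.symm
          have hx2u : x2 ≠ u := fun hh => by rw [hh, h] at hx2; exact hm2 hx2.symm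
          have hsub : ({v, w, u} : Set V) ⊆ G.neighborSet x2 := by
            rintro y (rfl | rfl | rfl)
            · exact (huniv _ hv _ hx2v).symm
            · exact (huniv _ hwm _ hx2w).symm
            · exact (huniv _ h _ hx2u).symm
          have hvu : v ≠ u := h1.symm
          have hwu : w ≠ u := h2.symm
          have h3 : ({v, w, u} : Set V).ncard = 3 := by
            rw [Set.ncard_insert_of_notMem (by simp [hwv.symm, hvu]),
              Set.ncard_insert_of_notMem (by simp [hwu]), Set.ncard_singleton]
          have := Set.ncard_le_ncard hsub (Set.toFinite _)
          rw [h3] at this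
          rw [SimpleGraph.degN] at hx2
          omega
      have hNu : ∀ u, u ≠ v → u ≠ w → G.neighborSet u = {v, w} := by
        intro u h1 h2
        have hsub : ({v, w} : Set V) ⊆ G.neighborSet u := by
          rintro y (rfl | rfl)
          · exact (huniv _ hv _ h1).symm
          · exact (huniv _ hwm _ h2).symm
        refine (Set.eq_of_subset_of_ncard_le hsub ?_ (Set.toFinite _)).symm
        rw [Set.ncard_pair hwv.symm]
        rw [← hall2 u h1 h2, SimpleGraph.degN]
      have hadj : ∀ a b, G.Adj a b ↔ a ≠ b ∧ (a = v ∨ a = w ∨ b = v ∨ b = w) := by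
        intro a b
        constructor
        · intro h
          refine ⟨h.ne, ?_⟩
          by_contra hc
          push_neg at hc
          obtain ⟨hav, haw, hbv, hbw⟩ := hc
          have : b ∈ G.neighborSet a := h
          rw [hNu a hav haw] at this
          rcases this with rfl | rfl
          · exact hbv rfl
          · exact hbw rfl
        · rintro ⟨hne, rfl | rfl | rfl | rfl⟩
          · exact huniv _ hv _ (Ne.symm hne)
          · exact huniv _ hwm _ (Ne.symm hne)
          · exact (huniv _ hv _ hne).symm
          · exact (huniv _ hwm _ hne).symm
      exact iso_pinwheel hm hcard v w (Ne.symm hwv) hadj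
    · -- windmill case
      right
      push_neg at hw
      have h2all : ∀ u : V, u ≠ v → G.degN u = 2 := by
        intro u hu
        rcases hdeg u with h | h
        · exact h
        · exact absurd h (hw u hu)
      have hspec : ∀ u : {x : V // x ≠ v}, ∃ a : {x : V // x ≠ v},
          G.neighborSet u.val \ {v} = {a.val} := by
        intro u
        have hvmem : v ∈ G.neighborSet u.val := (huniv _ hv _ u.2).symm
        have hd : (G.neighborSet u.val \ {v}).ncard = 1 := by
          rw [Set.ncard_diff_singleton_of_mem hvmem]
          have := h2all u.val u.2
          rw [SimpleGraph.degN] at this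
          omega
        obtain ⟨a, haa⟩ := Set.ncard_eq_one.mp hd
        have hav : a ≠ v := by
          have : a ∈ G.neighborSet u.val \ {v} := by rw [haa]; exact rfl
          exact this.2
        exact ⟨⟨a, hav⟩, haa⟩
      let σ : {x : V // x ≠ v} → {x : V // x ≠ v} := fun u => (hspec u).choose
      have σspec : ∀ u, G.neighborSet u.val \ {v} = {(σ u).val} := fun u => (hspec u).choose_spec
      have adjσ : ∀ u, G.Adj u.val (σ u).val := by
        intro u
        have : (σ u).val ∈ G.neighborSet u.val \ {v} := by rw [σspec u]; exact rfl
        exact this.1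
      have partner : ∀ u a, G.Adj u.val a.val → σ u = a := by
        intro u a h
        have : a.val ∈ G.neighborSet u.val \ {v} := ⟨h, a.2⟩
        rw [σspec u] at this
        exact (Subtype.ext this).symm
      have hinv : Function.Involutive σ := fun u => partner (σ u) u (adjσ u).symm
      have hσne : ∀ u, σ u ≠ u := by
        intro u h
        exact G.irrefl (h ▸ adjσ u)
      have hadj : ∀ a b : V, G.Adj a b ↔ a ≠ b ∧ (a = v ∨ b = v ∨
          ∃ (ha : a ≠ v) (hb : b ≠ v), σ ⟨a, ha⟩ = ⟨b, hb⟩) := by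
        intro a b
        constructor
        · intro h
          refine ⟨h.ne, ?_⟩
          by_cases hav : a = v
          · exact Or.inl hav
          by_cases hbv : b = v
          · exact Or.inr (Or.inl hbv)
          exact Or.inr (Or.inr ⟨hav, hbv, partner ⟨a, hav⟩ ⟨b, hbv⟩ h⟩)
        · rintro ⟨hne, rfl | rfl | ⟨ha, hb, h⟩⟩
          · exact huniv _ hv _ (Ne.symm hne)
          · exact (huniv _ hv _ hne).symm
          · have := adjσ ⟨a, ha⟩
            rw [h] at this
            exact this
      exact iso_windmill hcard v σ hinv hσne hadj
end

section
/- For every integer m ≥ 3, n_p({2,m};4) = m+2, and the complete bipartite graph K_{2,m} is the unique planar ({2,m};4)-cage (up to isomorphism). -/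
open SimpleGraph

/-! ### Auxiliary lemmas -/

/-- A graph on `W` whose adjacency structure forces an edge outside every set of
at most two vertices is not a minor of `K_{2,m}`. -/
lemma no_minor_aux {m : ℕ} {W : Type} [Fintype W] [DecidableEq W] (H : SimpleGraph W)
    (hmin : H.IsMinorOf (completeBipartiteGraph (Fin 2) (Fin m)))
    (hW : ∀ S : Finset W, S.card ≤ 2 → ∃ w₁ ∉ S, ∃ w₂ ∉ S, H.Adj w₁ w₂) : False := by
  classical
  obtain ⟨f, hconn, hdisj, hadj⟩ := hmin
  set S : Finset W := Finset.univ.filter (fun w => ∃ a : Fin 2, Sum.inl a ∈ f w) with hS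
  have hcard : S.card ≤ 2 := by
    have h2 : S.card ≤ (Finset.univ : Finset (Fin 2)).card := by
      apply Finset.card_le_card_of_injOn
        (fun w => if h : ∃ a : Fin 2, Sum.inl a ∈ f w then h.choose else 0)
      · intro a _; exact Finset.mem_univ _
      · intro w₁ h₁ w₂ h₂ heq
        simp only [hS, Finset.coe_filter, Finset.mem_univ, true_and, Set.mem_setOf_eq] at h₁ h₂
        simp only at heq
        rw [dif_pos h₁, dif_pos h₂] at heq
        by_contra hne
        exact Set.not_disjoint_iff.2 ⟨_, h₁.choose_spec, heq ▸ h₂.choose_spec⟩ (hdisj hne)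
    simpa using h2
  obtain ⟨w₁, hw₁, w₂, hw₂, hadj12⟩ := hW S hcard
  obtain ⟨v₁, hv₁, v₂, hv₂, hvadj⟩ := hadj hadj12
  cases v₁ with
  | inl a =>
    refine hw₁ ?_
    simp only [hS, Finset.mem_filter, Finset.mem_univ, true_and]
    exact ⟨a, hv₁⟩
  | inr b₁ =>
    cases v₂ with
    | inl a =>
      refine hw₂ ?_
      simp only [hS, Finset.mem_filter, Finset.mem_univ, true_and]
      exact ⟨a, hv₂⟩
    | inr b₂ => simp at hvadj

lemma K5_cond : ∀ S : Finset (Fin 5), S.card ≤ 2 →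
    ∃ w₁ ∉ S, ∃ w₂ ∉ S, (completeGraph (Fin 5)).Adj w₁ w₂ := by
  intro S hS
  have hc : 1 < Sᶜ.card := by
    have := Finset.card_compl S
    simp at this
    omega
  obtain ⟨a, ha, b, hb, hab⟩ := Finset.one_lt_card.mp hc
  exact ⟨a, by simpa using ha, b, by simpa using hb, by simpa using hab⟩

lemma K33_cond : ∀ S : Finset (Fin 3 ⊕ Fin 3), S.card ≤ 2 →
    ∃ w₁ ∉ S, ∃ w₂ ∉ S, (completeBipartiteGraph (Fin 3) (Fin 3)).Adj w₁ w₂ := by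
  intro S hS
  have hl : ∃ x : Fin 3, Sum.inl x ∉ S := by
    by_contra h
    push_neg at h
    have : (Finset.univ : Finset (Fin 3)).card ≤ S.card :=
      Finset.card_le_card_of_injOn (fun x => Sum.inl x) (fun x _ => h x)
        (fun x _ y _ hxy => by simpa using hxy)
    simp at this; omega
  have hr : ∃ y : Fin 3, Sum.inr y ∉ S := by
    by_contra h
    push_neg at h
    have : (Finset.univ : Finset (Fin 3)).card ≤ S.card :=
      Finset.card_le_card_of_injOn (fun x => Sum.inr x) (fun x _ => h x)
        (fun x _ y _ hxy => by simpa using hxy)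
    simp at this; omega
  obtain ⟨x, hx⟩ := hl
  obtain ⟨y, hy⟩ := hr
  exact ⟨_, hx, _, hy, by simp⟩

lemma K2m_planar (m : ℕ) : (completeBipartiteGraph (Fin 2) (Fin m)).IsPlanar :=
  ⟨fun h => no_minor_aux _ h K5_cond, fun h => no_minor_aux _ h K33_cond⟩

lemma triangle_cycle {V : Type*} {G : SimpleGraph V} {a b c : V}
    (hab : G.Adj a b) (hbc : G.Adj b c) (hca : G.Adj c a) :
    ∃ w : G.Walk a a, w.IsCycle ∧ w.length = 3 := by
  refine ⟨Walk.cons hab (Walk.cons hbc (Walk.cons hca Walk.nil)), ?_, rfl⟩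
  simp [Walk.isCycle_def, Walk.isTrail_def, hab.ne, hbc.ne, hca.ne, hca.ne',
    hab.ne', hbc.ne', (G.ne_of_adj hca).symm]

lemma egirth_le_cycle {V : Type*} {G : SimpleGraph V} {a : V} {w : G.Walk a a}
    (hw : w.IsCycle) : G.egirth ≤ w.length := by
  calc G.egirth ≤ ⨅ _ : w.IsCycle, (w.length : ℕ∞) := by
        rw [egirth]; exact le_trans (iInf_le _ a) (iInf_le _ w)
  _ ≤ w.length := iInf_le _ hw

lemma girth_four_triangle_free {V : Type*} {G : SimpleGraph V} (h : G.girth = 4) :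
    ∀ a b c : V, G.Adj a b → G.Adj b c → G.Adj c a → False := by
  intro a b c hab hbc hca
  obtain ⟨w, hw, hl⟩ := triangle_cycle hab hbc hca
  have hle : G.egirth ≤ 3 := by simpa [hl] using egirth_le_cycle hw
  have : G.girth ≤ 3 := by
    have := ENat.toNat_le_toNat hle (by simp)
    simpa [girth] using this
  omega

lemma K2m_no_three_cycle (m : ℕ) {a : Fin 2 ⊕ Fin m}
    (w : (completeBipartiteGraph (Fin 2) (Fin m)).Walk a a) (hl : w.length = 3) : False := by
  cases w with
  | nil => simp at hl
  | cons h1 p =>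
    cases p with
    | nil => simp at hl
    | cons h2 q =>
      cases q with
      | nil => simp at hl
      | cons h3 r =>
        cases r with
        | nil =>
          rename_i b c
          clear hl
          rcases a with a | a <;> rcases b with b | b <;> rcases c with c | c <;>
            simp_all [completeBipartiteGraph_adj]
        | cons h4 s => simp at hl

lemma K2m_girth (m : ℕ) (hm : 3 ≤ m) :
    (completeBipartiteGraph (Fin 2) (Fin m)).girth = 4 := by
  set G := completeBipartiteGraph (Fin 2) (Fin m) with hG
  have h01 : (⟨0, by omega⟩ : Fin m) ≠ ⟨1, by omega⟩ := by simp
  have hA : (0 : Fin 2) ≠ 1 := by decide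
  have h1 : G.Adj (Sum.inl 0) (Sum.inr ⟨0, by omega⟩) := by simp [hG]
  have h2 : G.Adj (Sum.inr ⟨0, by omega⟩) (Sum.inl 1) := by simp [hG]
  have h3 : G.Adj (Sum.inl 1) (Sum.inr ⟨1, by omega⟩) := by simp [hG]
  have h4 : G.Adj (Sum.inr ⟨1, by omega⟩) (Sum.inl 0) := by simp [hG]
  set w : G.Walk (Sum.inl 0) (Sum.inl 0) :=
    Walk.cons h1 (Walk.cons h2 (Walk.cons h3 (Walk.cons h4 Walk.nil))) with hw
  have hcyc : w.IsCycle := by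
    simp [hw, Walk.isCycle_def, Walk.isTrail_def, h01, h01.symm, hA, hA.symm]
  have hle : G.egirth ≤ 4 := by simpa [hw] using egirth_le_cycle hcyc
  have hge : (4 : ℕ∞) ≤ G.egirth := by
    rw [le_egirth]
    intro a w' hw'
    have h3l := hw'.three_le_length
    have : w'.length ≠ 3 := fun h => K2m_no_three_cycle m w' h
    have : 4 ≤ w'.length := by omega
    exact_mod_cast this
  have : G.egirth = 4 := le_antisymm hle hge
  simp [girth, this]

lemma degN_inl (m : ℕ) (i : Fin 2) :
    (completeBipartiteGraph (Fin 2) (Fin m)).degN (Sum.inl i) = m := by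
  have h : (completeBipartiteGraph (Fin 2) (Fin m)).neighborSet (Sum.inl i) =
      Set.range Sum.inr := by
    ext v; cases v <;> simp [neighborSet]
  rw [SimpleGraph.degN, h, ← Set.image_univ,
    Set.ncard_image_of_injective _ Sum.inr_injective, Set.ncard_univ]
  simp

lemma degN_inr (m : ℕ) (j : Fin m) :
    (completeBipartiteGraph (Fin 2) (Fin m)).degN (Sum.inr j) = 2 := by
  have h : (completeBipartiteGraph (Fin 2) (Fin m)).neighborSet (Sum.inr j) =
      Set.range Sum.inl := by
    ext v; cases v <;> simp [neighborSet]
  rw [SimpleGraph.degN, h, ← Set.image_univ,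
    Set.ncard_image_of_injective _ Sum.inl_injective, Set.ncard_univ]
  simp

/-- A second neighbour: a vertex of degree at least 2 adjacent to `v₀` has a
neighbour different from `v₀`. -/
lemma exists_second_neighbor {V : Type} {G : SimpleGraph V} {u v₀ : V}
    (hdu : 2 ≤ G.degN u) : ∃ w ∈ G.neighborSet u, w ≠ v₀ := by
  by_contra h
  push_neg at h
  have hsub : G.neighborSet u ⊆ {v₀} := fun w hw => h w hw
  have h1 := Set.ncard_le_ncard hsub (Set.finite_singleton _)
  rw [Set.ncard_singleton] at h1
  have : G.degN u ≤ 1 := h1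
  omega

lemma structure_lemma {V : Type} [Fintype V] (G : SimpleGraph V) (m : ℕ) (hm : 3 ≤ m)
    (htf : ∀ a b c : V, G.Adj a b → G.Adj b c → G.Adj c a → False)
    (hdeg : ∀ v, G.degN v = 2 ∨ G.degN v = m)
    (v₀ : V) (hv₀ : G.degN v₀ = m)
    (hcard : Fintype.card V = m + 2) :
    Nonempty (G ≃g completeBipartiteGraph (Fin 2) (Fin m)) := by
  classical
  set N := G.neighborSet v₀ with hNdef
  have hN : N.ncard = m := hv₀
  have hv₀N : v₀ ∉ N := by simp [hNdef]
  set A : Set V := insert v₀ N with hAdef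
  have hA : A.ncard = m + 1 := by
    rw [hAdef, Set.ncard_insert_of_notMem hv₀N (Set.toFinite N), hN]
  have hVcard : (Set.univ : Set V).ncard = m + 2 := by
    rw [Set.ncard_univ, Nat.card_eq_fintype_card, hcard]
  have hex : ∃ w₀ : V, w₀ ∉ A := by
    by_contra h
    push_neg at h
    have := Set.ncard_le_ncard (fun x _ => h x : (Set.univ : Set V) ⊆ A) (Set.toFinite A)
    omega
  obtain ⟨w₀, hw₀A⟩ := hex
  have hdiff : ((Set.univ : Set V) \ A).ncard = 1 := by
    rw [Set.ncard_diff (Set.subset_univ A) (Set.toFinite A), hVcard, hA]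
    omega
  have huniq : ∀ x, x ∉ A → x = w₀ := by
    obtain ⟨a, ha⟩ := Set.ncard_eq_one.mp hdiff
    intro x hx
    have hx' : x ∈ (Set.univ : Set V) \ A := ⟨trivial, hx⟩
    have hw' : w₀ ∈ (Set.univ : Set V) \ A := ⟨trivial, hw₀A⟩
    rw [ha] at hx' hw'
    rw [hx', hw']
  have hw₀v₀ : w₀ ≠ v₀ := fun h => hw₀A (h ▸ Set.mem_insert v₀ N)
  have hw₀N : w₀ ∉ N := fun h => hw₀A (Set.mem_insert_of_mem _ h)
  -- every neighbour of v₀ is adjacent to w₀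
  have hadjw₀ : ∀ u ∈ N, G.Adj u w₀ := by
    intro u hu
    have hdu : 2 ≤ G.degN u := by rcases hdeg u with h | h <;> omega
    obtain ⟨w, hw, hwv₀⟩ := exists_second_neighbor (v₀ := v₀) hdu
    have hwN : w ∉ N := fun hwN => htf v₀ u w hu hw (G.adj_symm hwN)
    have hwA : w ∉ A := by
      simp only [hAdef, Set.mem_insert_iff]
      push_neg
      exact ⟨hwv₀, hwN⟩
    have hww₀ := huniq w hwA
    exact hww₀ ▸ hw
  have hnadj : ¬ G.Adj v₀ w₀ := fun h => hw₀N h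
  have hNN : ∀ u ∈ N, ∀ u' ∈ N, ¬ G.Adj u u' :=
    fun u hu u' hu' h => htf v₀ u u' hu h (G.adj_symm hu')
  have hcover : ∀ v : V, v = v₀ ∨ v = w₀ ∨ v ∈ N := by
    intro v
    by_cases hv : v ∈ A
    · rcases hv with h | h
      · exact Or.inl h
      · exact Or.inr (Or.inr h)
    · exact Or.inr (Or.inl (huniq v hv))
  -- equivalence with Fin m
  haveI : Fintype N := (Set.toFinite N).fintype
  have hcardN : Fintype.card N = m := by
    rw [← Nat.card_eq_fintype_card, Nat.card_coe_set_eq, hN]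
  let e : N ≃ Fin m := Fintype.equivFinOfCardEq hcardN
  let ψ : Fin 2 ⊕ Fin m → V := fun x =>
    match x with
    | Sum.inl i => if i = 0 then v₀ else w₀
    | Sum.inr j => (e.symm j : V)
  have hψN : ∀ j, (ψ (Sum.inr j)) ∈ N := fun j => (e.symm j).2
  have hB : ∀ i : Fin 2, ψ (Sum.inl i) = v₀ ∨ ψ (Sum.inl i) = w₀ := by
    intro i
    by_cases h : i = 0
    · left; simp [ψ, h]
    · right; simp [ψ, h]
  have hnoBB : ∀ x y : V, (x = v₀ ∨ x = w₀) → (y = v₀ ∨ y = w₀) → ¬ G.Adj x y := by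
    rintro x y (rfl | rfl) (rfl | rfl) h
    exacts [G.irrefl h, hnadj h, hnadj (G.adj_symm h), G.irrefl h]
  have hBN : ∀ x y : V, (x = v₀ ∨ x = w₀) → y ∈ N → G.Adj x y := by
    rintro x y (rfl | rfl) hy
    · exact hy
    · exact G.adj_symm (hadjw₀ y hy)
  have hBnotN : ∀ i : Fin 2, ψ (Sum.inl i) ∉ N := by
    intro i
    rcases hB i with h | h <;> rw [h]
    · exact hv₀N
    · exact hw₀N
  have hinj : Function.Injective ψ := by
    intro x y hxy
    rcases x with i | j <;> rcases y with i' | j'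
    · by_cases hi : i = 0 <;> by_cases hi' : i' = 0
      · rw [hi, hi']
      · exfalso
        simp only [ψ, if_pos hi, if_neg hi'] at hxy
        exact hw₀v₀ hxy.symm
      · exfalso
        simp only [ψ, if_neg hi, if_pos hi'] at hxy
        exact hw₀v₀ hxy
      · congr 1
        omega
    · exact absurd (hxy ▸ hψN j') (hBnotN i)
    · exact absurd (hxy ▸ hψN j) (hBnotN i')
    · have h1 : e.symm j = e.symm j' := Subtype.ext hxy
      have := congrArg e h1
      simpa using this
  have hsurj : Function.Surjective ψ := by
    intro v
    rcases hcover v with h | h | h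
    · exact ⟨Sum.inl 0, by simp [ψ, h]⟩
    · refine ⟨Sum.inl 1, ?_⟩
      show (if (1 : Fin 2) = 0 then v₀ else w₀) = v
      rw [if_neg (by decide), h]
    · exact ⟨Sum.inr (e ⟨v, h⟩), by simp [ψ]⟩
  have hiso : ∀ x y, G.Adj (ψ x) (ψ y) ↔ (completeBipartiteGraph (Fin 2) (Fin m)).Adj x y := by
    intro x y
    rcases x with i | j <;> rcases y with i' | j'
    · exact ⟨fun h => absurd h (hnoBB _ _ (hB i) (hB i')), fun h => by simp at h⟩
    · exact ⟨fun _ => by simp, fun _ => hBN _ _ (hB i) (hψN j')⟩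
    · exact ⟨fun _ => by simp, fun _ => G.adj_symm (hBN _ _ (hB i') (hψN j))⟩
    · exact ⟨fun h => absurd h (hNN _ (hψN j) _ (hψN j')), fun h => by simp at h⟩
  let Φ : Fin 2 ⊕ Fin m ≃ V := Equiv.ofBijective ψ ⟨hinj, hsurj⟩
  exact ⟨(RelIso.mk Φ (fun {x y} => hiso x y)).symm⟩

/-- For `m ≥ 3`, `n_p({2,m};4) = m+2`, and the complete bipartite graph
`K_{2,m}` is the unique planar `({2,m};4)`-cage up to isomorphism. -/
theorem planar_two_m_four_cages (m : ℕ) (hm : 3 ≤ m) :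
    IsLeast (bicageOrders 2 m 4) (m + 2) ∧
    ∀ (V : Type) [Fintype V] (G : SimpleGraph V),
      G.IsPlanar → IsBigirthGraph G 2 m 4 → Fintype.card V = m + 2 →
      Nonempty (G ≃g completeBipartiteGraph (Fin 2) (Fin m)) := by
  constructor
  · constructor
    · -- membership: K_{2,m} works
      refine ⟨Fin 2 ⊕ Fin m, inferInstance, completeBipartiteGraph (Fin 2) (Fin m),
        K2m_planar m, ⟨K2m_girth m hm, ?_, ?_, ?_⟩, ?_⟩
      · intro v
        rcases v with i | j
        · exact Or.inr (degN_inl m i)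
        · exact Or.inl (degN_inr m j)
      · exact ⟨Sum.inr ⟨0, by omega⟩, degN_inr m _⟩
      · exact ⟨Sum.inl 0, degN_inl m _⟩
      · simp [Fintype.card_sum]
        omega
    · -- lower bound
      rintro n ⟨V, _, G, hpl, ⟨hgirth, hdeg, hex2, hexm⟩, hcardn⟩
      have htf := girth_four_triangle_free hgirth
      obtain ⟨v₀, hv₀⟩ := hexm
      set N := G.neighborSet v₀ with hNdef
      have hN : N.ncard = m := hv₀
      have hv₀N : v₀ ∉ N := by simp [hNdef]
      have hNne : N.Nonempty := by
        apply Set.nonempty_of_ncard_ne_zero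
        omega
      obtain ⟨u, hu⟩ := hNne
      have hdu : 2 ≤ G.degN u := by rcases hdeg u with h | h <;> omega
      obtain ⟨w, hw, hwv₀⟩ := exists_second_neighbor (v₀ := v₀) hdu
      have hwN : w ∉ N := fun hwN => htf v₀ u w hu hw (G.adj_symm hwN)
      have hwmem : w ∉ insert v₀ N := by
        simp only [Set.mem_insert_iff]
        push_neg
        exact ⟨hwv₀, hwN⟩
      have hcard2 : (insert w (insert v₀ N)).ncard = m + 2 := by
        rw [Set.ncard_insert_of_notMem hwmem (Set.toFinite _),
          Set.ncard_insert_of_notMem hv₀N (Set.toFinite _), hN]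
      have hle := Set.ncard_le_ncard (Set.subset_univ (insert w (insert v₀ N)))
        (Set.toFinite _)
      rw [hcard2, Set.ncard_univ, Nat.card_eq_fintype_card, hcardn] at hle
      exact hle
  · -- uniqueness
    intro V _ G hpl ⟨hgirth, hdeg, hex2, hexm⟩ hcard
    have htf := girth_four_triangle_free hgirth
    obtain ⟨v₀, hv₀⟩ := hexm
    exact structure_lemma G m hm htf hdeg v₀ hv₀ hcard
end

section
/- Let m ≥ 3 and let G be a finite planar simple graph on m+1 vertices having at least one vertex of degree m. If G has at least three vertices of degree m, then either m = 3 and G has exactly four vertices of degree 3, or m = 4 and G has exactly three vertices of degree 4. In particular, if m ≥ 5 then G has at most two vertices of degree m. -/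
open SimpleGraph

lemma minor_of_inj {W V : Type*} {H : SimpleGraph W} {G : SimpleGraph V} (g : W → V)
    (hg : Function.Injective g) (hadj : ∀ ⦃w₁ w₂⦄, H.Adj w₁ w₂ → G.Adj (g w₁) (g w₂)) :
    H.IsMinorOf G := by
  refine ⟨fun w => {g w}, fun w => ?_, fun w₁ w₂ h => ?_, fun w₁ w₂ h => ⟨g w₁, rfl, g w₂, rfl, hadj h⟩⟩
  · haveI : Nonempty ({g w} : Set V) := ⟨⟨g w, rfl⟩⟩
    refine ⟨fun x y => ?_⟩
    have : x = y := Subtype.ext (x.2.trans y.2.symm)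
    exact this ▸ SimpleGraph.Reachable.refl x
  · simpa [Set.disjoint_singleton] using hg.ne h


lemma compl_single {V : Type} [Fintype V] {m : ℕ} (hcard : Fintype.card V = m + 1) (v : V) :
    ({v}ᶜ : Set V).ncard = m := by
  have := Set.ncard_add_ncard_compl ({v} : Set V)
  rw [Set.ncard_singleton, Nat.card_eq_fintype_card, hcard] at this
  omega

lemma nb_sub {V : Type} (G : SimpleGraph V) (v : V) : G.neighborSet v ⊆ ({v}ᶜ : Set V) :=
  fun x hx => by simpa using (G.ne_of_adj hx).symm

lemma full {V : Type} [Fintype V] {G : SimpleGraph V} {m : ℕ} (hcard : Fintype.card V = m + 1)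
    {v : V} (hv : G.degN v = m) {w : V} (hw : w ≠ v) : G.Adj v w := by
  have heq : G.neighborSet v = ({v}ᶜ : Set V) := by
    exact Set.eq_of_subset_of_ncard_le (nb_sub G v)
      (by rw [compl_single hcard]; exact hv.ge) (Set.toFinite _)
  have : w ∈ G.neighborSet v := heq ▸ (by simpa using hw)
  exact this

lemma three_distinct {V : Type} {S : Set V} (h : 3 ≤ S.ncard) :
    ∃ a b c : V, a ∈ S ∧ b ∈ S ∧ c ∈ S ∧ a ≠ b ∧ a ≠ c ∧ b ≠ c := by
  obtain ⟨t, hts, ht3⟩ := Set.exists_subset_card_eq h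
  obtain ⟨a, b, c, hab, hac, hbc, rfl⟩ := Set.ncard_eq_three.mp ht3
  exact ⟨a, b, c, hts (by simp), hts (by simp), hts (by simp), hab, hac, hbc⟩

set_option maxHeartbeats 1000000 in
/-- Let `m ≥ 3` and let `G` be a finite planar graph on `m+1` vertices
with at least one vertex of degree `m`. If `G` has at least three vertices of degree
`m`, then either `m = 3` and `G` has exactly four vertices of degree `3`, or `m = 4`
and `G` has exactly three vertices of degree `4`. In particular, if `m ≥ 5` then `G`
has at most two vertices of degree `m`. -/
theorem planar_order_succ_max_degree_count {V : Type} [Fintype V] (G : SimpleGraph V)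
    (m : ℕ) (hm : 3 ≤ m) (hcard : Fintype.card V = m + 1)
    (hpl : G.IsPlanar) (hex : ∃ v, G.degN v = m) :
    (3 ≤ {v | G.degN v = m}.ncard →
      (m = 3 ∧ {v | G.degN v = m}.ncard = 4) ∨
        (m = 4 ∧ {v | G.degN v = m}.ncard = 3)) ∧
    (5 ≤ m → {v | G.degN v = m}.ncard ≤ 2) := by

  set S := {v | G.degN v = m} with hS
  -- key: 3 vertices of degree m forces m ≤ 4 (else K₃,₃)
  have key : 3 ≤ S.ncard → m ≤ 4 := by
    intro h3
    by_contra hlt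
    push_neg at hlt
    obtain ⟨a, b, c, ha, hb, hc, hab, hac, hbc⟩ := three_distinct h3
    have habc : ({a, b, c} : Set V).ncard = 3 :=
      Set.ncard_eq_three.mpr ⟨a, b, c, hab, hac, hbc, rfl⟩
    have hT : 3 ≤ (({a, b, c} : Set V)ᶜ).ncard := by
      have := Set.ncard_add_ncard_compl ({a, b, c} : Set V)
      rw [habc, Nat.card_eq_fintype_card, hcard] at this
      omega
    obtain ⟨x, y, z, hx, hy, hz, hxy, hxz, hyz⟩ := three_distinct hT
    simp only [Set.mem_compl_iff, Set.mem_insert_iff, Set.mem_singleton_iff, not_or] at hx hy hz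
    apply hpl.2
    refine minor_of_inj (Sum.elim ![a, b, c] ![x, y, z]) ?_ ?_
    · intro p q h
      rcases p with p | p <;> rcases q with q | q <;> fin_cases p <;> fin_cases q <;>
        simp_all
    · intro p q h
      rcases p with p | p <;> rcases q with q | q
      case inl.inl => simp at h
      case inr.inr => simp at h
      all_goals fin_cases p <;> fin_cases q <;>
        first
          | exact full hcard ha (by tauto)
          | exact full hcard hb (by tauto)
          | exact full hcard hc (by tauto)
          | exact (full hcard ha (by tauto)).symm
          | exact (full hcard hb (by tauto)).symm
          | exact (full hcard hc (by tauto)).symm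
  -- key5 : m = 4 and 4 vertices of degree 4 forces K₅
  have key5 : m = 4 → S.ncard ≤ 3 := by
    rintro rfl
    by_contra h4
    push_neg at h4
    have h4 : 4 ≤ S.ncard := h4
    have hne0 : S.ncard ≠ 0 := by omega
    obtain ⟨a, haS⟩ := Set.nonempty_of_ncard_ne_zero hne0
    have hd : 3 ≤ (S \ {a}).ncard := by
      rw [Set.ncard_diff_singleton_of_mem haS]; omega
    obtain ⟨b, c, d, hb', hc', hd', hbc, hbd, hcd⟩ := three_distinct hd
    obtain ⟨hb, hba⟩ := hb'
    obtain ⟨hc, hca⟩ := hc'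
    obtain ⟨hd, hda⟩ := hd'
    simp only [Set.mem_singleton_iff] at hba hca hda
    have habcd : ({a, b, c, d} : Set V).ncard ≤ 4 := by
      have h1 := Set.ncard_insert_le a ({b, c, d} : Set V)
      have h2 := Set.ncard_insert_le b ({c, d} : Set V)
      have h3 := Set.ncard_insert_le c ({d} : Set V)
      rw [Set.ncard_singleton] at h3
      omega
    have hE : (({a, b, c, d} : Set V)ᶜ).Nonempty := by
      apply Set.nonempty_of_ncard_ne_zero
      have := Set.ncard_add_ncard_compl ({a, b, c, d} : Set V)
      rw [Nat.card_eq_fintype_card, hcard] at this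
      omega
    obtain ⟨e, he⟩ := hE
    simp only [Set.mem_compl_iff, Set.mem_insert_iff, Set.mem_singleton_iff, not_or] at he
    obtain ⟨hea, heb, hec, hed⟩ := he
    apply hpl.1
    have hinj : Function.Injective (![a, b, c, d, e] : Fin 5 → V) := by
      intro p q h
      fin_cases p <;> fin_cases q <;> simp_all
    have adj45 : ∀ u w : V, u ∈ ({a, b, c, d} : Set V) → w ≠ u → G.Adj u w := by
      rintro u w (rfl | rfl | rfl | rfl) hw
      · exact full hcard haS hw
      · exact full hcard hb hw
      · exact full hcard hc hw
      · exact full hcard hd hw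
    have hmem : ∀ p : Fin 5, p ≠ 4 → (![a, b, c, d, e] : Fin 5 → V) p ∈ ({a, b, c, d} : Set V) := by
      intro p hp
      fin_cases p <;> simp_all
    refine minor_of_inj ![a, b, c, d, e] hinj ?_
    intro p q h
    have hpq : p ≠ q := by rintro rfl; simp at h
    have hne : (![a, b, c, d, e] : Fin 5 → V) p ≠ ![a, b, c, d, e] q := fun he => hpq (hinj he)
    by_cases hp4 : p = 4
    · subst hp4
      exact (adj45 _ _ (hmem q (fun hq => hpq hq.symm)) hne).symm
    · exact adj45 _ _ (hmem p hp4) hne.symm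
  -- m = 3 : all vertices have degree 3
  have key3 : m = 3 → 3 ≤ S.ncard → S.ncard = 4 := by
    rintro rfl h3
    obtain ⟨a, b, c, ha, hb, hc, hab, hac, hbc⟩ := three_distinct h3
    have hall : S = Set.univ := by
      ext v
      simp only [Set.mem_univ, iff_true, hS, Set.mem_setOf_eq]
      by_cases hv : v = a ∨ v = b ∨ v = c
      · rcases hv with rfl | rfl | rfl <;> assumption
      · push_neg at hv
        obtain ⟨hva, hvb, hvc⟩ := hv
        have hsub : ({a, b, c} : Set V) ⊆ G.neighborSet v := by
          rintro x (rfl | rfl | rfl)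
          · exact (full hcard ha hva).symm
          · exact (full hcard hb hvb).symm
          · exact (full hcard hc hvc).symm
        have h1 : 3 ≤ G.degN v := by
          rw [← Set.ncard_eq_three.mpr ⟨a, b, c, hab, hac, hbc, rfl⟩]
          exact Set.ncard_le_ncard hsub (Set.toFinite _)
        have h2 : G.degN v ≤ 3 := by
          have := Set.ncard_le_ncard (nb_sub G v) (Set.toFinite _)
          rwa [compl_single hcard v] at this
        omega
    rw [hall, Set.ncard_univ, Nat.card_eq_fintype_card, hcard]
  refine ⟨fun h3 => ?_, fun h5 => ?_⟩
  · have hm4 := key h3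
    interval_cases m
    · exact Or.inl ⟨rfl, key3 rfl h3⟩
    · exact Or.inr ⟨rfl, le_antisymm (key5 rfl) h3⟩
  · by_contra hc
    push_neg at hc
    exact absurd (key hc) (by omega)
end

section
/- Every finite outerplanar simple graph with at least 4 vertices in which every vertex has degree at least 2 contains two non-adjacent vertices each of degree exactly 2. -/
open SimpleGraph

section Infra
variable {V : Type*} {W : Type*} {U : Type*}

lemma induce_connected_singleton' (G : SimpleGraph V) (v : V) :
    (G.induce {v}).Connected := by
  rw [SimpleGraph.connected_iff]
  refine ⟨?_, ⟨⟨v, rfl⟩⟩⟩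
  intro a b
  have : a = b := Subtype.ext (by
    have ha := a.2; have hb := b.2
    simp only [Set.mem_singleton_iff] at ha hb; rw [ha, hb])
  rw [this]

lemma induce_connected_pair' (G : SimpleGraph V) {a b : V} (h : G.Adj a b) :
    (G.induce {a, b}).Connected := by
  have ha : a ∈ ({a, b} : Set V) := Or.inl rfl
  have hb : b ∈ ({a, b} : Set V) := Or.inr rfl
  rw [SimpleGraph.connected_iff]
  refine ⟨?_, ⟨⟨a, ha⟩⟩⟩
  have key : ∀ u : ↥({a, b} : Set V), (G.induce {a, b}).Reachable ⟨a, ha⟩ u := by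
    rintro ⟨u, hu⟩
    rcases hu with hu | hu
    · subst hu; exact Reachable.refl _
    · subst hu
      exact Adj.reachable (by exact h)
  intro u v
  exact (key u).symm.trans (key v)

def homOfLEset (G : SimpleGraph V) {s t : Set V} (h : s ⊆ t) : G.induce s →g G.induce t where
  toFun v := ⟨v.1, h v.2⟩
  map_rel' := fun {u v} huv => huv

private lemma reach_aux (G : SimpleGraph V) (H : SimpleGraph W) (f : W → Set V)
    (hfconn : ∀ w, (G.induce (f w)).Connected)
    (hfadj : ∀ ⦃w₁ w₂⦄, H.Adj w₁ w₂ → ∃ v₁ ∈ f w₁, ∃ v₂ ∈ f w₂, G.Adj v₁ v₂)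
    (P : Set W) :
    ∀ {x y : ↥P} (_ : (H.induce P).Walk x y) (a : V) (ha : a ∈ f x.1) (b : V)
      (hb : b ∈ f y.1),
      (G.induce (⋃ w ∈ P, f w)).Reachable ⟨a, Set.mem_biUnion x.2 ha⟩
        ⟨b, Set.mem_biUnion y.2 hb⟩ := by
  intro x y p
  induction p with
  | nil =>
    intro a ha b hb
    exact Reachable.map (homOfLEset G (Set.subset_biUnion_of_mem (by exact Subtype.mem _)))
      ((hfconn _).preconnected ⟨a, ha⟩ ⟨b, hb⟩)
  | @cons x' z y' hadj q ih =>
    intro a ha b hb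
    obtain ⟨a', ha', b', hb', hG⟩ := hfadj (by exact hadj : H.Adj x'.1 z.1)
    have r1 : (G.induce (⋃ w ∈ P, f w)).Reachable ⟨a, Set.mem_biUnion x'.2 ha⟩
        ⟨a', Set.mem_biUnion x'.2 ha'⟩ :=
      Reachable.map (homOfLEset G (Set.subset_biUnion_of_mem (by exact Subtype.mem _)))
        ((hfconn _).preconnected ⟨a, ha⟩ ⟨a', ha'⟩)
    have r2 : (G.induce (⋃ w ∈ P, f w)).Adj ⟨a', Set.mem_biUnion x'.2 ha'⟩
        ⟨b', Set.mem_biUnion z.2 hb'⟩ := hG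
    exact r1.trans (r2.reachable.trans (ih b' hb' b hb))

lemma SimpleGraph.IsMinorOf.trans {K : SimpleGraph U} {H : SimpleGraph W} {G : SimpleGraph V}
    (h1 : K.IsMinorOf H) (h2 : H.IsMinorOf G) : K.IsMinorOf G := by
  obtain ⟨g, hgconn, hgdisj, hgadj⟩ := h1
  obtain ⟨f, hfconn, hfdisj, hfadj⟩ := h2
  refine ⟨fun u => ⋃ w ∈ g u, f w, ?_, ?_, ?_⟩
  · intro u
    have hne : ∃ w, w ∈ g u := by
      obtain ⟨⟨w, hw⟩⟩ := (hgconn u).nonempty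
      exact ⟨w, hw⟩
    obtain ⟨w0, hw0⟩ := hne
    obtain ⟨⟨a0, ha0⟩⟩ := (hfconn w0).nonempty
    rw [SimpleGraph.connected_iff]
    refine ⟨?_, ⟨⟨a0, Set.mem_biUnion hw0 ha0⟩⟩⟩
    rintro ⟨a, haF⟩ ⟨b, hbF⟩
    simp only [Set.mem_iUnion] at haF hbF
    obtain ⟨w1, hw1, ha⟩ := haF
    obtain ⟨w2, hw2, hb⟩ := hbF
    obtain ⟨p⟩ := (hgconn u).preconnected ⟨w1, hw1⟩ ⟨w2, hw2⟩
    exact reach_aux G H f hfconn hfadj (g u) p a ha b hb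
  · intro u1 u2 hne
    rw [Set.disjoint_left]
    rintro a ha1 ha2
    simp only [Set.mem_iUnion] at ha1 ha2
    obtain ⟨w1, hw1, ha1⟩ := ha1
    obtain ⟨w2, hw2, ha2⟩ := ha2
    rcases eq_or_ne w1 w2 with rfl | hww
    · exact (Set.disjoint_left.mp (hgdisj hne) hw1) hw2
    · exact (Set.disjoint_left.mp (hfdisj hww) ha1) ha2
  · intro u1 u2 hadj
    obtain ⟨w1, hw1, w2, hw2, hHadj⟩ := hgadj hadj
    obtain ⟨a, ha, b, hb, hab⟩ := hfadj hHadj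
    exact ⟨a, Set.mem_biUnion hw1 ha, b, Set.mem_biUnion hw2 hb, hab⟩

lemma induce_isMinorOf (G : SimpleGraph V) (s : Set V) : (G.induce s).IsMinorOf G := by
  refine ⟨fun w => {w.1}, fun w => induce_connected_singleton' G w.1, ?_, ?_⟩
  · intro w1 w2 hne
    simp only [Set.disjoint_singleton_left, Set.mem_singleton_iff]
    exact fun h => hne (Subtype.ext h)
  · intro w1 w2 hadj
    exact ⟨w1.1, rfl, w2.1, rfl, hadj⟩
end Infra
section CG
variable {V : Type*}

/-- Contract the edge `x y`, deleting `y` and keeping `x` as the merged vertex. -/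
def cg (G : SimpleGraph V) (x y : V) : SimpleGraph ↥({y}ᶜ : Set V) where
  Adj u v := u.1 ≠ v.1 ∧ (G.Adj u.1 v.1 ∨ (u.1 = x ∧ G.Adj y v.1) ∨ (v.1 = x ∧ G.Adj u.1 y))
  symm := ⟨by
    rintro u v ⟨hne, h⟩
    refine ⟨hne.symm, ?_⟩
    rcases h with h | ⟨h1, h2⟩ | ⟨h1, h2⟩
    · exact Or.inl h.symm
    · exact Or.inr (Or.inr ⟨h1, h2.symm⟩)
    · exact Or.inr (Or.inl ⟨h1, h2.symm⟩)⟩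
  loopless := ⟨fun u h => h.1 rfl⟩

lemma cg_isMinorOf (G : SimpleGraph V) {x y : V} (h : G.Adj x y) : (cg G x y).IsMinorOf G := by
  classical
  have hself : ∀ w : ↥({y}ᶜ : Set V), w.1 ∈ (if w.1 = x then ({x, y} : Set V) else {w.1}) := by
    intro w; split
    · exact Or.inl (by assumption)
    · rfl
  refine ⟨fun w => if w.1 = x then ({x, y} : Set V) else {w.1}, ?_, ?_, ?_⟩
  · intro w
    dsimp only
    by_cases hw : w.1 = x
    · rw [if_pos hw]; exact induce_connected_pair' G h
    · rw [if_neg hw]; exact induce_connected_singleton' G _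
  · intro w1 w2 hne
    have hv : w1.1 ≠ w2.1 := fun hh => hne (Subtype.ext hh)
    have h1y : w1.1 ≠ y := w1.2
    have h2y : w2.1 ≠ y := w2.2
    dsimp only
    by_cases e1 : w1.1 = x <;> by_cases e2 : w2.1 = x
    · exact absurd (e1.trans e2.symm) hv
    · rw [if_pos e1, if_neg e2, Set.disjoint_singleton_right]
      rintro (hh | hh)
      · exact e2 hh
      · exact h2y hh
    · rw [if_neg e1, if_pos e2, Set.disjoint_singleton_left]
      rintro (hh | hh)
      · exact e1 hh
      · exact h1y hh
    · rw [if_neg e1, if_neg e2, Set.disjoint_singleton_left, Set.mem_singleton_iff]; exact hv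
  · rintro w1 w2 ⟨hne, hcase⟩
    rcases hcase with h' | ⟨h1, h2⟩ | ⟨h1, h2⟩
    · exact ⟨w1.1, hself w1, w2.1, hself w2, h'⟩
    · refine ⟨y, ?_, w2.1, hself w2, h2⟩
      dsimp only
      rw [if_pos h1]
      exact Or.inr rfl
    · refine ⟨w1.1, hself w1, y, ?_, h2⟩
      dsimp only
      rw [if_pos h1]
      exact Or.inr rfl

lemma cg_image_center (G : SimpleGraph V) {x y : V} (hxy : x ≠ y) :
    Subtype.val '' ((cg G x y).neighborSet ⟨x, hxy⟩) =
      (G.neighborSet x ∪ G.neighborSet y) \ {x, y} := by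
  ext v
  constructor
  · rintro ⟨⟨v', hv'⟩, hadj, rfl⟩
    obtain ⟨hne, hc⟩ := hadj
    have hvy : v' ≠ y := hv'
    have hvx : v' ≠ x := fun hh => hne (by simp [hh])
    refine ⟨?_, ?_⟩
    · rcases hc with h | ⟨-, h⟩ | ⟨h1, -⟩
      · exact Or.inl h
      · exact Or.inr h
      · exact absurd h1 hvx
    · rintro (rfl | hh)
      · exact hvx rfl
      · exact hvy hh
  · rintro ⟨h, hv2⟩
    have hvx : v ≠ x := fun hh => hv2 (Or.inl hh)
    have hvy : v ≠ y := fun hh => hv2 (Or.inr hh)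
    refine ⟨⟨v, hvy⟩, ⟨fun hh => hvx (by simpa using hh.symm), ?_⟩, rfl⟩
    rcases h with h | h
    · exact Or.inl h
    · exact Or.inr (Or.inl ⟨rfl, h⟩)

lemma cg_image_other_adj (G : SimpleGraph V) {x y : V} (hxy : x ≠ y)
    (w : ↥({y}ᶜ : Set V)) (hw : w.1 ≠ x) (hadjy : G.Adj w.1 y) :
    Subtype.val '' ((cg G x y).neighborSet w) = insert x (G.neighborSet w.1 \ {y}) := by
  ext v
  constructor
  · rintro ⟨⟨v', hv'⟩, ⟨hne, hc⟩, rfl⟩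
    have hvy : v' ≠ y := hv'
    rcases hc with h | ⟨h1, -⟩ | ⟨h1, -⟩
    · exact Set.mem_insert_of_mem _ ⟨h, hvy⟩
    · exact absurd h1 hw
    · exact h1 ▸ Set.mem_insert _ _
  · intro hv
    rcases hv with rfl | ⟨h, hvy⟩
    · exact ⟨⟨v, fun hh => hxy ((Set.mem_singleton_iff.mp hh) ▸ rfl)⟩, ⟨fun hh => hw hh, Or.inr (Or.inr ⟨rfl, hadjy⟩)⟩, rfl⟩
    · exact ⟨⟨v, hvy⟩, ⟨G.ne_of_adj h, Or.inl h⟩, rfl⟩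

lemma cg_image_other_nonadj (G : SimpleGraph V) {x y : V}
    (w : ↥({y}ᶜ : Set V)) (hw : w.1 ≠ x) (hnadjy : ¬ G.Adj w.1 y) :
    Subtype.val '' ((cg G x y).neighborSet w) = G.neighborSet w.1 \ {y} := by
  ext v
  constructor
  · rintro ⟨⟨v', hv'⟩, ⟨hne, hc⟩, rfl⟩
    have hvy : v' ≠ y := hv'
    rcases hc with h | ⟨h1, -⟩ | ⟨h1, h2⟩
    · exact ⟨h, hvy⟩
    · exact absurd h1 hw
    · exact absurd h2 hnadjy
  · rintro ⟨h, hvy⟩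
    exact ⟨⟨v, hvy⟩, ⟨G.ne_of_adj h, Or.inl h⟩, rfl⟩

lemma degN_eq_image_ncard {y : V} (G' : SimpleGraph ↥({y}ᶜ : Set V))
    (w : ↥({y}ᶜ : Set V)) :
    G'.degN w = (Subtype.val '' (G'.neighborSet w)).ncard := by
  rw [SimpleGraph.degN, Set.ncard_image_of_injective _ Subtype.val_injective]

lemma degN_induce_eq (G : SimpleGraph V) (s : Set V) (v : ↥s) :
    (G.induce s).degN v = (G.neighborSet v.1 ∩ s).ncard := by
  rw [SimpleGraph.degN, ← Set.ncard_image_of_injective _ (Subtype.val_injective (p := (· ∈ s)))]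
  congr 1
  ext w
  constructor
  · rintro ⟨⟨w', hw'⟩, hadj, rfl⟩
    exact ⟨hadj, hw'⟩
  · rintro ⟨hadj, hw⟩
    exact ⟨⟨w, hw⟩, hadj, rfl⟩
end CG
section Helpers
variable {V : Type*} [Fintype V]

lemma card_coe_set_fin (s : Set V) [Fintype ↥s] : Fintype.card ↥s = s.ncard :=
  (Nat.card_eq_fintype_card).symm.trans (Nat.card_coe_set_eq s)

lemma ncard_compl_fin (s : Set V) : (sᶜ : Set V).ncard = Fintype.card V - s.ncard := by
  rw [Set.compl_eq_univ_diff, Set.ncard_diff (Set.subset_univ s), Set.ncard_univ,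
    Nat.card_eq_fintype_card]

lemma exists_not_mem_of_ncard_lt (s : Set V) (h : s.ncard < Fintype.card V) :
    ∃ c, c ∉ s := by
  by_contra hc
  push_neg at hc
  have : (Set.univ : Set V) ⊆ s := fun v _ => hc v
  have := Set.ncard_le_ncard this (Set.toFinite s)
  rw [Set.ncard_univ, Nat.card_eq_fintype_card] at this
  omega

lemma degN_le_of_subset {G : SimpleGraph V} {v : V} {s : Set V}
    (h : G.neighborSet v ⊆ s) : G.degN v ≤ s.ncard :=
  Set.ncard_le_ncard h (Set.toFinite s)

lemma set_eq_pair_of_ncard {s : Set V} {a b : V} (h2 : s.ncard = 2) (ha : a ∈ s)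
    (hb : b ∈ s) (hab : a ≠ b) : s = {a, b} :=
  (Set.eq_of_subset_of_ncard_le
    (by rintro v (rfl | rfl); exacts [ha, hb])
    (by rw [h2, Set.ncard_pair hab])).symm

lemma exists_third_of_ncard_three {s : Set V} {p q : V} (h3 : s.ncard = 3) (hp : p ∈ s)
    (hq : q ∈ s) (hpq : p ≠ q) : ∃ t, t ≠ p ∧ t ≠ q ∧ s = {p, q, t} := by
  have hsub : ({p, q} : Set V) ⊆ s := by rintro v (rfl | rfl); exacts [hp, hq]
  have hd : (s \ {p, q}).ncard = 1 := by
    rw [Set.ncard_diff hsub, h3, Set.ncard_pair hpq]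
  obtain ⟨t, ht⟩ := Set.ncard_eq_one.mp hd
  have htm : t ∈ s \ ({p, q} : Set V) := ht ▸ rfl
  refine ⟨t, fun hh => htm.2 (Or.inl hh), fun hh => htm.2 (Or.inr hh), ?_⟩
  have := Set.diff_union_of_subset hsub
  rw [ht] at this
  rw [← this]
  ext v
  simp only [Set.mem_union, Set.mem_singleton_iff, Set.mem_insert_iff]
  tauto

lemma SimpleGraph.IsOuterplanar.of_isMinorOf {W : Type*} {G : SimpleGraph V} {H : SimpleGraph W}
    (h : G.IsOuterplanar) (hm : H.IsMinorOf G) : H.IsOuterplanar :=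
  ⟨fun h4 => h.1 (h4.trans hm), fun h23 => h.2 (h23.trans hm)⟩

end Helpers
section Master

private def Good {V : Type*} (G : SimpleGraph V) : Prop :=
  ∃ u v, u ≠ v ∧ ¬ G.Adj u v ∧ G.degN u ≤ 2 ∧ G.degN v ≤ 2

private def MP (m : ℕ) : Prop :=
  ∀ (V : Type) [Fintype V] (G : SimpleGraph V), Fintype.card V = m → 4 ≤ m →
    G.IsOuterplanar → (∀ u v : V, G.degN u ≤ 1 → G.degN v ≤ 1 → u = v) → Good G

private def MB (n : ℕ) : Prop := ∀ m, m < n → MP m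

variable {V : Type} [Fintype V] {n : ℕ}

private lemma caseA (IH : MB n) (G : SimpleGraph V)
    (hn : Fintype.card V = n) (h4 : 4 ≤ n) (hout : G.IsOuterplanar)
    (hδ2 : ∀ v, 2 ≤ G.degN v) {x a b : V} (hNx : G.neighborSet x = {a, b})
    (hab : a ≠ b) (hnadj : ¬ G.Adj a b) : Good G := by
  classical
  have hdx : G.degN x = 2 := by rw [SimpleGraph.degN, hNx, Set.ncard_pair hab]
  have hxa : G.Adj x a := by rw [← SimpleGraph.mem_neighborSet, hNx]; exact Or.inl rfl
  have hxb : G.Adj x b := by rw [← SimpleGraph.mem_neighborSet, hNx]; exact Or.inr rfl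
  have hxna : x ≠ a := fun h => G.irrefl (h ▸ hxa)
  have hxnb : x ≠ b := fun h => G.irrefl (h ▸ hxb)
  by_cases hsmall : n = 4
  · obtain ⟨c, hc⟩ := exists_not_mem_of_ncard_lt ({x, a, b} : Set V) (by
      have h1 := Set.ncard_insert_le x ({a, b} : Set V)
      have h2 := Set.ncard_pair hab
      omega)
    have hcx : c ≠ x := fun h => hc (Or.inl h)
    have hca : c ≠ a := fun h => hc (Or.inr (Or.inl h))
    have hcb : c ≠ b := fun h => hc (Or.inr (Or.inr h))
    have hnxc : ¬ G.Adj x c := by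
      intro h
      have : c ∈ G.neighborSet x := h
      rw [hNx] at this
      rcases this with h' | h'
      · exact hca h'
      · exact hcb h'
    have hsub : G.neighborSet c ⊆ ({x, c} : Set V)ᶜ := by
      intro v hv hmem
      rcases hmem with rfl | rfl
      · exact hnxc ((SimpleGraph.mem_neighborSet _ _ _).mp hv).symm
      · exact G.irrefl hv
    have hdc : G.degN c ≤ 2 := by
      have := degN_le_of_subset hsub
      rwa [ncard_compl_fin, Set.ncard_pair (Ne.symm hcx), hn, hsmall] at this
    exact ⟨x, c, Ne.symm hcx, hnxc, by omega, hdc⟩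
  · -- suppress x
    have hax : G.Adj a x := hxa.symm
    have hanx : a ≠ x := Ne.symm hxna
    have hcard' : Fintype.card ↥({x}ᶜ : Set V) = n - 1 := by
      rw [card_coe_set_fin, ncard_compl_fin, Set.ncard_singleton, hn]
    have hmin : (cg G a x).IsMinorOf G := cg_isMinorOf G hax
    have hdeg' : ∀ w : ↥({x}ᶜ : Set V), (cg G a x).degN w = G.degN w.1 := by
      intro w
      by_cases hwa : w.1 = a
      · have hw : w = ⟨a, fun hh => hanx hh⟩ := Subtype.ext hwa
        rw [degN_eq_image_ncard, hw, cg_image_center G hanx]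
        have hset : (G.neighborSet a ∪ G.neighborSet x) \ {a, x}
            = insert b (G.neighborSet a \ {x}) := by
          rw [hNx]
          ext v
          constructor
          · rintro ⟨hu, hne⟩
            have hva : v ≠ a := fun h => hne (Or.inl h)
            have hvx : v ≠ x := fun h => hne (Or.inr h)
            rcases hu with hu | hu
            · exact Set.mem_insert_of_mem _ ⟨hu, hvx⟩
            · rcases hu with h | h
              · exact absurd h hva
              · exact h ▸ Set.mem_insert _ _
          · rintro (rfl | ⟨hu, hvx⟩)
            · exact ⟨Or.inr (Or.inr rfl),
                fun hh => by rcases hh with h | h; exacts [hab h.symm, hxnb h.symm]⟩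
            · exact ⟨Or.inl hu,
                fun hh => by rcases hh with h | h; exacts [G.irrefl (h ▸ hu), hvx h]⟩
        rw [hset, Set.ncard_insert_of_notMem (by
            rintro ⟨hmem, -⟩
            exact hnadj hmem),
          Set.ncard_diff_singleton_of_mem (show x ∈ G.neighborSet a from hax)]
        have h1 : 2 ≤ G.degN a := hδ2 a
        rw [SimpleGraph.degN] at h1 ⊢
        show (G.neighborSet a).ncard - 1 + 1 = (G.neighborSet a).ncard
        omega
      · by_cases hwx : G.Adj w.1 x
        · have hwb : w.1 = b := by
            have : w.1 ∈ G.neighborSet x := hwx.symm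
            rw [hNx] at this
            rcases this with h' | h'
            · exact absurd h' hwa
            · exact h'
          rw [degN_eq_image_ncard, cg_image_other_adj G hanx w hwa hwx]
          rw [Set.ncard_insert_of_notMem (by
              rintro ⟨hmem, -⟩
              exact hnadj (hwb ▸ hmem).symm),
            Set.ncard_diff_singleton_of_mem (show x ∈ G.neighborSet w.1 from by rw [hwb]; exact hxb.symm)]
          have h1 : 2 ≤ G.degN w.1 := hδ2 w.1
          rw [SimpleGraph.degN] at h1 ⊢
          omega
        · rw [degN_eq_image_ncard, cg_image_other_nonadj G w hwa hwx,
            Set.diff_singleton_eq_self (show x ∉ G.neighborSet w.1 from fun hmem => hwx hmem), SimpleGraph.degN]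
    obtain ⟨u, v, huv, hnadj', hu2, hv2⟩ :=
      IH (n - 1) (by omega) _ (cg G a x) hcard' (by omega) (hout.of_isMinorOf hmin)
        (fun u v h1 _ => absurd h1 (by rw [hdeg' u]; have := hδ2 u.1; omega))
    refine ⟨u.1, v.1, fun h => huv (Subtype.ext h), ?_,
      by rw [← hdeg' u]; exact hu2, by rw [← hdeg' v]; exact hv2⟩
    intro hA
    exact hnadj' ⟨fun h => huv (Subtype.ext h), Or.inl hA⟩

private lemma caseB (IH : MB n) (G : SimpleGraph V)
    (hn : Fintype.card V = n) (h4 : 4 ≤ n) (hout : G.IsOuterplanar)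
    (hlow1 : ∀ u v : V, G.degN u ≤ 1 → G.degN v ≤ 1 → u = v)
    {x : V} (hx : G.degN x ≤ 1) : Good G := by
  classical
  have hother : ∀ v : V, v ≠ x → 2 ≤ G.degN v := by
    intro v hv
    by_contra hvc
    exact hv (hlow1 v x (by omega) hx)
  have hcase : G.degN x = 0 ∨ G.degN x = 1 := by omega
  rcases hcase with hx0 | hx1
  · -- isolated vertex
    have hNx : G.neighborSet x = ∅ := (Set.ncard_eq_zero (Set.toFinite _)).mp hx0
    have hnadjx : ∀ v, ¬ G.Adj x v := by
      intro v h
      have : v ∈ G.neighborSet x := h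
      rw [hNx] at this
      exact this
    by_cases hsmall : n = 4
    · obtain ⟨c, hc⟩ := Fintype.exists_ne_of_one_lt_card (by omega) x
      have hsub : G.neighborSet c ⊆ ({x, c} : Set V)ᶜ := by
        intro v hv hmem
        rcases hmem with rfl | rfl
        · exact hnadjx c ((SimpleGraph.mem_neighborSet _ _ _).mp hv).symm
        · exact G.irrefl hv
      have hdc : G.degN c ≤ 2 := by
        have := degN_le_of_subset hsub
        rwa [ncard_compl_fin, Set.ncard_pair (Ne.symm hc), hn, hsmall] at this
      exact ⟨x, c, Ne.symm hc, hnadjx c, by omega, hdc⟩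
    · have hcard' : Fintype.card ↥({x}ᶜ : Set V) = n - 1 := by
        rw [card_coe_set_fin, ncard_compl_fin, Set.ncard_singleton, hn]
      have hdeg' : ∀ w : ↥({x}ᶜ : Set V), (G.induce {x}ᶜ).degN w = G.degN w.1 := by
        intro w
        rw [degN_induce_eq, SimpleGraph.degN, Set.inter_eq_left.mpr (by
          intro v hv hmem
          rw [Set.mem_singleton_iff] at hmem
          exact hnadjx w.1 (((SimpleGraph.mem_neighborSet _ _ _).mp (hmem ▸ hv)).symm))]
      obtain ⟨u, v, huv, hnadj', hu2, hv2⟩ :=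
        IH (n - 1) (by omega) _ (G.induce {x}ᶜ) hcard' (by omega)
          (hout.of_isMinorOf (induce_isMinorOf G _))
          (fun u v h1 _ => absurd h1 (by rw [hdeg' u]; have := hother u.1 u.2; omega))
      exact ⟨u.1, v.1, fun h => huv (Subtype.ext h),
        fun hA => hnadj' (by exact hA), by rw [← hdeg' u]; exact hu2,
        by rw [← hdeg' v]; exact hv2⟩
  · -- degree-one vertex
    obtain ⟨a, hNx⟩ := Set.ncard_eq_one.mp hx1
    have hxa : G.Adj x a := by rw [← SimpleGraph.mem_neighborSet, hNx]; exact rfl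
    have hxna : x ≠ a := G.ne_of_adj hxa
    have hnadjxc : ∀ v, v ≠ a → ¬ G.Adj x v := by
      intro v hv h
      have : v ∈ G.neighborSet x := h
      rw [hNx] at this
      exact hv this
    by_cases hsmall : n = 4
    · obtain ⟨c, hc⟩ := exists_not_mem_of_ncard_lt ({x, a} : Set V) (by
        have := Set.ncard_pair hxna
        omega)
      have hcx : c ≠ x := fun h => hc (Or.inl h)
      have hca : c ≠ a := fun h => hc (Or.inr h)
      have hsub : G.neighborSet c ⊆ ({x, c} : Set V)ᶜ := by
        intro v hv hmem
        rcases hmem with rfl | rfl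
        · exact hnadjxc c hca ((SimpleGraph.mem_neighborSet _ _ _).mp hv).symm
        · exact G.irrefl hv
      have hdc : G.degN c ≤ 2 := by
        have := degN_le_of_subset hsub
        rwa [ncard_compl_fin, Set.ncard_pair (Ne.symm hcx), hn, hsmall] at this
      exact ⟨x, c, Ne.symm hcx, hnadjxc c hca, by omega, hdc⟩
    · have hcard' : Fintype.card ↥({x}ᶜ : Set V) = n - 1 := by
        rw [card_coe_set_fin, ncard_compl_fin, Set.ncard_singleton, hn]
      have hdeg'o : ∀ w : ↥({x}ᶜ : Set V), w.1 ≠ a →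
          (G.induce {x}ᶜ).degN w = G.degN w.1 := by
        intro w hwa
        rw [degN_induce_eq, SimpleGraph.degN, Set.inter_eq_left.mpr (by
          intro v hv hmem
          rw [Set.mem_singleton_iff] at hmem
          exact hnadjxc w.1 hwa (((SimpleGraph.mem_neighborSet _ _ _).mp (hmem ▸ hv)).symm))]
      have hdeg'a : ∀ w : ↥({x}ᶜ : Set V), w.1 = a →
          (G.induce {x}ᶜ).degN w + 1 = G.degN w.1 := by
        intro w hwa
        rw [degN_induce_eq, ← Set.diff_eq, hwa,
          Set.ncard_diff_singleton_of_mem (show x ∈ G.neighborSet a from hxa.symm)]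
        have h1 : 2 ≤ G.degN a := hother a (Ne.symm hxna)
        rw [SimpleGraph.degN] at h1 ⊢
        omega
      obtain ⟨u, v, huv, hnadj', hu2, hv2⟩ :=
        IH (n - 1) (by omega) _ (G.induce {x}ᶜ) hcard' (by omega)
          (hout.of_isMinorOf (induce_isMinorOf G _))
          (by
            intro u v h1 h2
            by_cases hua : u.1 = a
            · by_cases hva : v.1 = a
              · exact Subtype.ext (hua.trans hva.symm)
              · exact absurd h2 (by
                  rw [hdeg'o v hva]
                  have := hother v.1 v.2
                  omega)
            · exact absurd h1 (by
                rw [hdeg'o u hua]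
                have := hother u.1 u.2
                omega))
      by_cases hua : u.1 = a
      · have hva : v.1 ≠ a := fun h => huv (Subtype.ext (hua.trans h.symm))
        refine ⟨x, v.1, fun h => v.2 h.symm, hnadjxc v.1 hva, by omega, ?_⟩
        rw [← hdeg'o v hva]; exact hv2
      · by_cases hva : v.1 = a
        · refine ⟨x, u.1, fun h => u.2 h.symm, hnadjxc u.1 hua, by omega, ?_⟩
          rw [← hdeg'o u hua]; exact hu2
        · exact ⟨u.1, v.1, fun h => huv (Subtype.ext h),
            fun hA => hnadj' (by exact hA), by rw [← hdeg'o u hua]; exact hu2,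
            by rw [← hdeg'o v hva]; exact hv2⟩

end Master
section MasterC0
variable {V : Type} [Fintype V] {n : ℕ}

private lemma caseC0 (IH : MB n) (G : SimpleGraph V)
    (hn : Fintype.card V = n) (h4 : 4 ≤ n) (hout : G.IsOuterplanar)
    (hδ3 : ∀ v, 3 ≤ G.degN v) : Good G := by
  classical
  exfalso
  by_cases hsmall : n = 4
  · -- G is complete on 4 vertices: K4 minor
    have hcomp : ∀ u v : V, u ≠ v → G.Adj u v := by
      intro u v huv
      have hsub : G.neighborSet u ⊆ ({u} : Set V)ᶜ :=
        fun w hw hh => G.irrefl ((Set.mem_singleton_iff.mp hh) ▸ hw)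
      have h1 : (({u} : Set V)ᶜ).ncard = 3 := by
        rw [ncard_compl_fin, Set.ncard_singleton, hn, hsmall]
      have heq := Set.eq_of_subset_of_ncard_le hsub (by rw [h1]; exact hδ3 u)
        (Set.toFinite _)
      have : v ∈ G.neighborSet u := by
        rw [heq]
        exact fun hh => huv (Set.mem_singleton_iff.mp hh).symm
      exact this
    have e : Fin 4 ≃ V := Fintype.equivOfCardEq (by rw [hn, hsmall, Fintype.card_fin])
    refine hout.1 ⟨fun i => {e i}, fun i => induce_connected_singleton' G _, ?_, ?_⟩
    · intro i j hij
      rw [Set.disjoint_singleton_left, Set.mem_singleton_iff]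
      exact fun h => hij (e.injective h)
    · intro i j hij
      exact ⟨e i, rfl, e j, rfl, hcomp _ _ (fun h => hij (e.injective h))⟩
  · -- n ≥ 5
    have hV : Nonempty V := Fintype.card_pos_iff.mp (by omega)
    obtain ⟨v0⟩ := hV
    have hNv0 : (G.neighborSet v0).Nonempty :=
      Set.nonempty_of_ncard_ne_zero (by have := hδ3 v0; rw [SimpleGraph.degN] at this; omega)
    obtain ⟨y0, hy0⟩ := hNv0
    have hxy : G.Adj v0 y0 := hy0
    have hstar : ∀ p q, G.Adj p q → ∃ w1 w2 : V, w1 ≠ w2 ∧ ¬ G.Adj w1 w2 ∧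
        G.Adj w1 p ∧ G.Adj w1 q ∧ G.Adj w2 p ∧ G.Adj w2 q ∧ G.degN w1 = 3 := by
      intro p q hpq
      have hpq' : p ≠ q := G.ne_of_adj hpq
      have hcard' : Fintype.card ↥({q}ᶜ : Set V) = n - 1 := by
        rw [card_coe_set_fin, ncard_compl_fin, Set.ncard_singleton, hn]
      have hmin : (cg G p q).IsMinorOf G := cg_isMinorOf G hpq
      have hdegs : ∀ w : ↥({q}ᶜ : Set V), 2 ≤ (cg G p q).degN w ∧
          ((cg G p q).degN w ≤ 2 → w.1 ≠ p →
            (G.Adj w.1 p ∧ G.Adj w.1 q ∧ G.degN w.1 = 3)) := by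
        intro w
        by_cases hwp : w.1 = p
        · have hw : w = ⟨p, fun hh => hpq' hh⟩ := Subtype.ext hwp
          constructor
          · rw [degN_eq_image_ncard, hw, cg_image_center G hpq']
            have hsub : G.neighborSet p \ {q} ⊆
                (G.neighborSet p ∪ G.neighborSet q) \ ({p, q} : Set V) := by
              rintro v ⟨hv, hvq⟩
              refine ⟨Or.inl hv, ?_⟩
              rintro (rfl | hh)
              · exact G.irrefl hv
              · exact hvq hh
            have h1 := Set.ncard_le_ncard hsub (Set.toFinite _)
            have h2 : (G.neighborSet p \ {q}).ncard = G.degN p - 1 :=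
              Set.ncard_diff_singleton_of_mem (show q ∈ G.neighborSet p from hpq)
            have h3 := hδ3 p
            omega
          · intro _ hwp2
            exact absurd hwp hwp2
        · by_cases hwq : G.Adj w.1 q
          · by_cases hwp2 : G.Adj w.1 p
            · have him : Subtype.val '' ((cg G p q).neighborSet w) =
                  G.neighborSet w.1 \ {q} := by
                rw [cg_image_other_adj G hpq' w hwp hwq, Set.insert_eq_self.mpr
                  (show p ∈ G.neighborSet w.1 \ {q} from ⟨hwp2, fun hh => hpq' (Set.mem_singleton_iff.mp hh)⟩)]
              have h2 : (G.neighborSet w.1 \ {q}).ncard = G.degN w.1 - 1 :=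
                Set.ncard_diff_singleton_of_mem (show q ∈ G.neighborSet w.1 from hwq)
              have h3 := hδ3 w.1
              rw [degN_eq_image_ncard, him, h2]
              exact ⟨by omega, fun hle _ => ⟨hwp2, hwq, by omega⟩⟩
            · have h2 : (insert p (G.neighborSet w.1 \ {q})).ncard = G.degN w.1 := by
                rw [Set.ncard_insert_of_notMem (fun hmem => hwp2 hmem.1),
                  Set.ncard_diff_singleton_of_mem (show q ∈ G.neighborSet w.1 from hwq)]
                have h3 := hδ3 w.1
                rw [SimpleGraph.degN] at h3 ⊢
                omega
              rw [degN_eq_image_ncard, cg_image_other_adj G hpq' w hwp hwq, h2]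
              have h3 := hδ3 w.1
              exact ⟨by omega, fun hle => absurd hle (by omega)⟩
          · rw [degN_eq_image_ncard, cg_image_other_nonadj G w hwp hwq,
              Set.diff_singleton_eq_self (show q ∉ G.neighborSet w.1 from hwq)]
            have h3 := hδ3 w.1
            rw [SimpleGraph.degN] at h3
            exact ⟨by omega, fun hle => absurd hle (by omega)⟩
      obtain ⟨u, v, huv, hnadj', hu2, hv2⟩ :=
        IH (n - 1) (by omega) _ (cg G p q) hcard' (by omega) (hout.of_isMinorOf hmin)
          (fun u v h1 _ => absurd h1 (by have := (hdegs u).1; omega))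
      have hvals : u.1 ≠ v.1 := fun h => huv (Subtype.ext h)
      by_cases hup : u.1 = p
      · have hv' := (hdegs v).2 hv2 (fun h => hvals (hup.trans h.symm))
        exact (hnadj' (⟨hvals, Or.inl (show G.Adj u.1 v.1 from by
          rw [hup]; exact hv'.1.symm)⟩ : (cg G p q).Adj u v)).elim
      · by_cases hvp : v.1 = p
        · have hu' := (hdegs u).2 hu2 hup
          exact (hnadj' (⟨hvals, Or.inl (show G.Adj u.1 v.1 from by
            rw [hvp]; exact hu'.1)⟩ : (cg G p q).Adj u v)).elim
        · obtain ⟨hup1, huq1, hu3⟩ := (hdegs u).2 hu2 hup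
          obtain ⟨hvp1, hvq1, hv3⟩ := (hdegs v).2 hv2 hvp
          exact ⟨u.1, v.1, hvals, fun hA => hnadj' ⟨hvals, Or.inl hA⟩,
            hup1, huq1, hvp1, hvq1, hu3⟩
    obtain ⟨w1, w2, hw12, hnadj12, hw1x, hw1y, hw2x, hw2y, hdw1⟩ := hstar v0 y0 hxy
    obtain ⟨t, htx, hty, hNw1⟩ := exists_third_of_ncard_three (s := G.neighborSet w1)
      hdw1 (show v0 ∈ _ from hw1x) (show y0 ∈ _ from hw1y) (G.ne_of_adj hxy)
    have hmemw1 : ∀ s', G.Adj w1 s' → s' = v0 ∨ s' = y0 ∨ s' = t := by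
      intro s' h
      have : s' ∈ G.neighborSet w1 := h
      rw [hNw1] at this
      exact this
    -- first application: common neighbours of v0 and w1
    obtain ⟨s1, s2, hs12, hnadjs, hs1x, hs1w1, hs2x, hs2w1, -⟩ := hstar v0 w1 hw1x.symm
    have hschar : ∀ s', G.Adj s' v0 → G.Adj s' w1 → s' = y0 ∨ s' = t := by
      intro s' h1 h2
      rcases hmemw1 s' h2.symm with rfl | h | h
      · exact absurd h1 (G.irrefl)
      · exact Or.inl h
      · exact Or.inr h
    have hyt : ¬ G.Adj y0 t := by
      rcases hschar s1 hs1x hs1w1 with rfl | rfl <;>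
        rcases hschar s2 hs2x hs2w1 with rfl | rfl
      · exact absurd rfl hs12
      · exact hnadjs
      · exact fun h => hnadjs h.symm
      · exact absurd rfl hs12
    obtain ⟨r1, r2, hr12, hnadjr, hr1y, hr1w1, hr2y, hr2w1, -⟩ := hstar y0 w1 hw1y.symm
    have hrchar : ∀ r', G.Adj r' y0 → G.Adj r' w1 → r' = v0 ∨ r' = t := by
      intro r' h1 h2
      rcases hmemw1 r' h2.symm with rfl | rfl | h
      · exact Or.inl rfl
      · exact absurd h1 (G.irrefl)
      · exact Or.inr h
    rcases hrchar r1 hr1y hr1w1 with rfl | rfl <;>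
      rcases hrchar r2 hr2y hr2w1 with rfl | rfl
    · exact hr12 rfl
    · exact hyt hr2y.symm
    · exact hyt hr1y.symm
    · exact hr12 rfl

end MasterC0
section MasterC1
variable {V : Type} [Fintype V] {n : ℕ}

private lemma caseC1c (IH : MB n) (G : SimpleGraph V)
    (hn : Fintype.card V = n) (h4 : 4 ≤ n) (hout : G.IsOuterplanar)
    (hδ2 : ∀ v, 2 ≤ G.degN v) {x a b : V} (hNx : G.neighborSet x = {a, b})
    (hab : a ≠ b) (hadjab : G.Adj a b)
    (hout3 : ∀ v, v ∉ ({x, a, b} : Set V) → 3 ≤ G.degN v)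
    (hNb : G.neighborSet b = {x, a}) (hdega : 3 ≤ G.degN a) : False := by
  classical
  have hxa : G.Adj x a := by rw [← SimpleGraph.mem_neighborSet, hNx]; exact Or.inl rfl
  have hxb : G.Adj x b := by rw [← SimpleGraph.mem_neighborSet, hNx]; exact Or.inr rfl
  have hxna : x ≠ a := fun h => G.irrefl (h ▸ hxa)
  have hxnb : x ≠ b := fun h => G.irrefl (h ▸ hxb)
  by_cases hsmall : n ≤ 5
  · obtain ⟨c, hc⟩ := exists_not_mem_of_ncard_lt ({x, a, b} : Set V) (by
      have h1 := Set.ncard_insert_le x ({a, b} : Set V)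
      have h2 := Set.ncard_pair hab
      omega)
    have hcx : c ≠ x := fun h => hc (Or.inl h)
    have hca : c ≠ a := fun h => hc (Or.inr (Or.inl h))
    have hcb : c ≠ b := fun h => hc (Or.inr (Or.inr h))
    have hsub : G.neighborSet c ⊆ ({x, b, c} : Set V)ᶜ := by
      intro u hu hmem
      rcases hmem with rfl | rfl | rfl
      · have h' : c ∈ G.neighborSet u := (show G.Adj c u from hu).symm
        rw [hNx] at h'
        rcases h' with h' | h'
        · exact hca h'
        · exact hcb h'
      · have h' : c ∈ G.neighborSet u := (show G.Adj c u from hu).symm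
        rw [hNb] at h'
        rcases h' with h' | h'
        · exact hcx h'
        · exact hca h'
      · exact G.irrefl hu
    have hkey := degN_le_of_subset hsub
    have hn3 : (({x, b, c} : Set V)ᶜ).ncard = n - 3 := by
      rw [ncard_compl_fin, hn]
      congr 1
      rw [Set.ncard_insert_of_notMem (by
          rintro (rfl | rfl)
          · exact hxnb rfl
          · exact hcx rfl), Set.ncard_pair (fun h => hcb h.symm)]
    have := hout3 c hc
    omega
  · -- n ≥ 6 : delete x and b
    have hxbne : x ≠ b := hxnb
    have hcard' : Fintype.card ↥(({x, b} : Set V)ᶜ) = n - 2 := by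
      rw [card_coe_set_fin, ncard_compl_fin, Set.ncard_pair hxbne, hn]
    have hwprops : ∀ w : ↥(({x, b} : Set V)ᶜ), w.1 ≠ x ∧ w.1 ≠ b := by
      intro w
      have h := w.2
      exact ⟨fun hh => h (Or.inl hh), fun hh => h (Or.inr hh)⟩
    have hdego : ∀ w : ↥(({x, b} : Set V)ᶜ), w.1 ≠ a →
        (G.induce ({x, b} : Set V)ᶜ).degN w = G.degN w.1 := by
      intro w hwa
      obtain ⟨hwx, hwb⟩ := hwprops w
      rw [degN_induce_eq, SimpleGraph.degN, Set.inter_eq_left.mpr ?_]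
      intro u hu hmem
      rcases hmem with rfl | rfl
      · have h' : w.1 ∈ G.neighborSet u := (show G.Adj w.1 u from hu).symm
        rw [hNx] at h'
        rcases h' with h' | h'
        · exact hwa h'
        · exact hwb h'
      · have h' : w.1 ∈ G.neighborSet u := (show G.Adj w.1 u from hu).symm
        rw [hNb] at h'
        rcases h' with h' | h'
        · exact hwx h'
        · exact hwa h'
    have hdega' : ∀ w : ↥(({x, b} : Set V)ᶜ), w.1 = a →
        (G.induce ({x, b} : Set V)ᶜ).degN w + 2 = G.degN w.1 := by
      intro w hwa
      rw [degN_induce_eq, ← Set.diff_eq, hwa,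
        Set.ncard_diff (show ({x, b} : Set V) ⊆ G.neighborSet a from by
          rintro u (rfl | rfl)
          · exact hxa.symm
          · exact hadjab)]
      rw [Set.ncard_pair hxbne, SimpleGraph.degN] at *
      omega
    obtain ⟨u, v, huv, hnadj', hu2, hv2⟩ :=
      IH (n - 2) (by omega) _ (G.induce ({x, b} : Set V)ᶜ) hcard' (by omega)
        (hout.of_isMinorOf (induce_isMinorOf G _))
        (by
          intro u v h1 h2
          by_cases hua : u.1 = a
          · by_cases hva : v.1 = a
            · exact Subtype.ext (hua.trans hva.symm)
            · exact absurd h2 (by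
                rw [hdego v hva]
                have := hout3 v.1 (by
                  rintro (h | h | h)
                  exacts [(hwprops v).1 h, hva h, (hwprops v).2 h])
                omega)
          · exact absurd h1 (by
              rw [hdego u hua]
              have := hout3 u.1 (by
                rintro (h | h | h)
                exacts [(hwprops u).1 h, hua h, (hwprops u).2 h])
              omega))
    by_cases hua : u.1 = a
    · have hva : v.1 ≠ a := fun h => huv (Subtype.ext (hua.trans h.symm))
      have := hout3 v.1 (by
        rintro (h | h | h)
        exacts [(hwprops v).1 h, hva h, (hwprops v).2 h])
      rw [hdego v hva] at hv2
      omega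
    · have := hout3 u.1 (by
        rintro (h | h | h)
        exacts [(hwprops u).1 h, hua h, (hwprops u).2 h])
      rw [hdego u hua] at hu2
      omega

private lemma caseC1 (IH : MB n) (G : SimpleGraph V)
    (hn : Fintype.card V = n) (h4 : 4 ≤ n) (hout : G.IsOuterplanar)
    (hδ2 : ∀ v, 2 ≤ G.degN v) {x a b : V} (hNx : G.neighborSet x = {a, b})
    (hab : a ≠ b) (hadjab : G.Adj a b) : Good G := by
  classical
  have hdx : G.degN x = 2 := by rw [SimpleGraph.degN, hNx, Set.ncard_pair hab]
  have hxa : G.Adj x a := by rw [← SimpleGraph.mem_neighborSet, hNx]; exact Or.inl rfl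
  have hxb : G.Adj x b := by rw [← SimpleGraph.mem_neighborSet, hNx]; exact Or.inr rfl
  have hxna : x ≠ a := fun h => G.irrefl (h ▸ hxa)
  have hxnb : x ≠ b := fun h => G.irrefl (h ▸ hxb)
  by_cases hc : ∃ v, v ∉ ({x, a, b} : Set V) ∧ G.degN v ≤ 2
  · obtain ⟨v, hv, hv2⟩ := hc
    have hvx : v ≠ x := fun h => hv (Or.inl h)
    have hva : v ≠ a := fun h => hv (Or.inr (Or.inl h))
    have hvb : v ≠ b := fun h => hv (Or.inr (Or.inr h))
    refine ⟨x, v, Ne.symm hvx, ?_, by omega, hv2⟩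
    intro h
    have : v ∈ G.neighborSet x := h
    rw [hNx] at this
    rcases this with h' | h'
    · exact hva h'
    · exact hvb h'
  · have hout3 : ∀ v, v ∉ ({x, a, b} : Set V) → 3 ≤ G.degN v := by
      intro v hv
      by_contra hh
      exact hc ⟨v, hv, by omega⟩
  -- split on the degrees of a and b
    have hda := hδ2 a
    have hdb := hδ2 b
    rcases Nat.lt_or_ge (G.degN a) 3 with ha | ha3 <;>
      rcases Nat.lt_or_ge (G.degN b) 3 with hb | hb3
    · -- C1a : both have degree 2, triangle component
      exfalso
      have ha2 : G.degN a = 2 := by omega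
      have hb2 : G.degN b = 2 := by omega
      have hNa : G.neighborSet a = {x, b} := set_eq_pair_of_ncard ha2
        (show x ∈ _ from hxa.symm) (show b ∈ _ from hadjab) hxnb
      have hNb : G.neighborSet b = {x, a} := set_eq_pair_of_ncard hb2
        (show x ∈ _ from hxb.symm) (show a ∈ _ from hadjab.symm) hxna
      have hNR : ∀ v, v ∉ ({x, a, b} : Set V) →
          G.neighborSet v ⊆ ({x, a, b} : Set V)ᶜ := by
        intro v hv u hu hmem
        rcases hmem with rfl | rfl | rfl
        · have h' : v ∈ G.neighborSet u := (show G.Adj v u from hu).symm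
          rw [hNx] at h'
          rcases h' with h' | h'
          · exact hv (Or.inr (Or.inl h'))
          · exact hv (Or.inr (Or.inr h'))
        · have h' : v ∈ G.neighborSet u := (show G.Adj v u from hu).symm
          rw [hNa] at h'
          rcases h' with h' | h'
          · exact hv (Or.inl h')
          · exact hv (Or.inr (Or.inr h'))
        · have h' : v ∈ G.neighborSet u := (show G.Adj v u from hu).symm
          rw [hNb] at h'
          rcases h' with h' | h'
          · exact hv (Or.inl h')
          · exact hv (Or.inr (Or.inl h'))
      have hxab : (({x, a, b} : Set V)).ncard = 3 := by
        rw [Set.ncard_insert_of_notMem (by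
            rintro (rfl | rfl)
            · exact hxna rfl
            · exact hxnb rfl), Set.ncard_pair hab]
      by_cases hbig : 7 ≤ n
      · have hcard' : Fintype.card ↥(({x, a, b} : Set V)ᶜ) = n - 3 := by
          rw [card_coe_set_fin, ncard_compl_fin, hxab, hn]
        have hdegR : ∀ w : ↥(({x, a, b} : Set V)ᶜ),
            (G.induce ({x, a, b} : Set V)ᶜ).degN w = G.degN w.1 := by
          intro w
          rw [degN_induce_eq, SimpleGraph.degN,
            Set.inter_eq_left.mpr (hNR w.1 w.2)]
        obtain ⟨u, v, huv, hnadj', hu2, hv2⟩ :=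
          IH (n - 3) (by omega) _ (G.induce ({x, a, b} : Set V)ᶜ) hcard' (by omega)
            (hout.of_isMinorOf (induce_isMinorOf G _))
            (fun u v h1 _ => absurd h1 (by
              rw [hdegR u]
              have := hout3 u.1 u.2
              omega))
        rw [hdegR u] at hu2
        have := hout3 u.1 u.2
        omega
      · -- n ≤ 6
        obtain ⟨c, hc'⟩ := exists_not_mem_of_ncard_lt ({x, a, b} : Set V) (by omega)
        have hcc : c ∉ G.neighborSet c := fun h => G.irrefl h
        have hsub : G.neighborSet c ⊆ ({x, a, b, c} : Set V)ᶜ := by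
          intro u hu hmem
          rcases hmem with rfl | rfl | rfl | rfl
          · exact hNR c hc' hu (Or.inl rfl)
          · exact hNR c hc' hu (Or.inr (Or.inl rfl))
          · exact hNR c hc' hu (Or.inr (Or.inr rfl))
          · exact hcc hu
        have hkey := degN_le_of_subset hsub
        have hcx : c ≠ x := fun h => hc' (Or.inl h)
        have hca : c ≠ a := fun h => hc' (Or.inr (Or.inl h))
        have hcb : c ≠ b := fun h => hc' (Or.inr (Or.inr h))
        have hn4 : (({x, a, b, c} : Set V)).ncard = 4 := by
          rw [Set.ncard_insert_of_notMem (by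
              rintro (rfl | rfl | rfl)
              · exact hxna rfl
              · exact hxnb rfl
              · exact hcx rfl),
            Set.ncard_insert_of_notMem (by
              rintro (rfl | rfl)
              · exact hab rfl
              · exact hca rfl),
            Set.ncard_pair (fun h => hcb h.symm)]
        rw [ncard_compl_fin, hn4, hn] at hkey
        have := hout3 c hc'
        omega
    · -- deg a = 2, deg b ≥ 3 : apply C1c with a and b swapped
      exact (caseC1c IH G hn h4 hout hδ2 (x := x) (a := b) (b := a)
        (by rw [hNx, Set.pair_comm]) hab.symm hadjab.symm
        (by
          intro v hv
          refine hout3 v ?_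
          rintro (h | h | h)
          exacts [hv (Or.inl h), hv (Or.inr (Or.inr h)), hv (Or.inr (Or.inl h))])
        (set_eq_pair_of_ncard (by omega : G.degN a = 2)
          (show x ∈ _ from hxa.symm) (show b ∈ _ from hadjab) hxnb) hb3).elim
    · -- deg a ≥ 3, deg b = 2 : C1c directly
      exact (caseC1c IH G hn h4 hout hδ2 hNx hab hadjab hout3
        (set_eq_pair_of_ncard (by omega : G.degN b = 2)
          (show x ∈ _ from hxb.symm) (show a ∈ _ from hadjab.symm) hxna) ha3).elim
    · -- C1b : both ≥ 3
      exfalso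
      by_cases hsmall : n = 4
      · obtain ⟨c, hc'⟩ := exists_not_mem_of_ncard_lt ({x, a, b} : Set V) (by
          have h1 := Set.ncard_insert_le x ({a, b} : Set V)
          have h2 := Set.ncard_pair hab
          omega)
        have hca : c ≠ a := fun h => hc' (Or.inr (Or.inl h))
        have hcb : c ≠ b := fun h => hc' (Or.inr (Or.inr h))
        have hcx : c ≠ x := fun h => hc' (Or.inl h)
        have hsub : G.neighborSet c ⊆ ({x, c} : Set V)ᶜ := by
          intro u hu hmem
          rcases hmem with rfl | rfl
          · have h' : c ∈ G.neighborSet u := (show G.Adj c u from hu).symm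
            rw [hNx] at h'
            rcases h' with h' | h'
            · exact hca h'
            · exact hcb h'
          · exact G.irrefl hu
        have hkey := degN_le_of_subset hsub
        rw [ncard_compl_fin, Set.ncard_pair (Ne.symm hcx), hn, hsmall] at hkey
        have := hout3 c hc'
        omega
      · have hcard' : Fintype.card ↥(({x} : Set V)ᶜ) = n - 1 := by
          rw [card_coe_set_fin, ncard_compl_fin, Set.ncard_singleton, hn]
        have hdegab : ∀ w : ↥(({x} : Set V)ᶜ), w.1 = a ∨ w.1 = b →
            (G.induce ({x} : Set V)ᶜ).degN w + 1 = G.degN w.1 := by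
          intro w hw
          rw [degN_induce_eq, ← Set.diff_eq,
            Set.ncard_diff_singleton_of_mem (show x ∈ G.neighborSet w.1 from by
              rcases hw with h | h <;> rw [h]
              · exact hxa.symm
              · exact hxb.symm)]
          have : 2 ≤ G.degN w.1 := hδ2 w.1
          rw [SimpleGraph.degN] at *
          omega
        have hdego : ∀ w : ↥(({x} : Set V)ᶜ), w.1 ≠ a → w.1 ≠ b →
            (G.induce ({x} : Set V)ᶜ).degN w = G.degN w.1 := by
          intro w hwa hwb
          rw [degN_induce_eq, SimpleGraph.degN, Set.inter_eq_left.mpr ?_]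
          intro u hu hmem
          rw [Set.mem_singleton_iff] at hmem
          subst hmem
          have h' : w.1 ∈ G.neighborSet u := (show G.Adj w.1 u from hu).symm
          rw [hNx] at h'
          rcases h' with h' | h'
          · exact hwa h'
          · exact hwb h'
        have hmin2 : ∀ w : ↥(({x} : Set V)ᶜ), 2 ≤ (G.induce ({x} : Set V)ᶜ).degN w := by
          intro w
          by_cases hwa : w.1 = a
          · have h2 := hdegab w (Or.inl hwa)
            rw [hwa] at h2
            omega
          · by_cases hwb : w.1 = b
            · have h2 := hdegab w (Or.inr hwb)
              rw [hwb] at h2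
              omega
            · rw [hdego w hwa hwb]
              have := hout3 w.1 (by
                rintro (h | h | h)
                exacts [w.2 h, hwa h, hwb h])
              omega
        obtain ⟨u, v, huv, hnadj', hu2, hv2⟩ :=
          IH (n - 1) (by omega) _ (G.induce ({x} : Set V)ᶜ) hcard' (by omega)
            (hout.of_isMinorOf (induce_isMinorOf G _))
            (fun u v h1 _ => absurd h1 (by have := hmin2 u; omega))
        have hvals : u.1 ≠ v.1 := fun h => huv (Subtype.ext h)
        by_cases hua : u.1 = a ∨ u.1 = b
        · by_cases hva : v.1 = a ∨ v.1 = b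
          · refine hnadj' (by
              show G.Adj u.1 v.1
              rcases hua with h1 | h1 <;> rcases hva with h2 | h2
              · exact absurd (h1.trans h2.symm) hvals
              · rw [h1, h2]; exact hadjab
              · rw [h1, h2]; exact hadjab.symm
              · exact absurd (h1.trans h2.symm) hvals)
          · push_neg at hva
            rw [hdego v hva.1 hva.2] at hv2
            have := hout3 v.1 (by
              rintro (h | h | h)
              exacts [v.2 h, hva.1 h, hva.2 h])
            omega
        · push_neg at hua
          rw [hdego u hua.1 hua.2] at hu2
          have := hout3 u.1 (by
            rintro (h | h | h)
            exacts [u.2 h, hua.1 h, hua.2 h])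
          omega

end MasterC1
private lemma master : ∀ n : ℕ, MP n := by
  intro n
  induction n using Nat.strong_induction_on with
  | _ n IH =>
  intro V _ G hn h4 hout hlow1
  classical
  by_cases hlow : ∃ x, G.degN x ≤ 1
  · obtain ⟨x, hx⟩ := hlow
    exact caseB IH G hn h4 hout hlow1 hx
  · push_neg at hlow
    have hδ2 : ∀ v, 2 ≤ G.degN v := fun v => hlow v
    by_cases h2 : ∃ x, G.degN x = 2
    · obtain ⟨x, hx2⟩ := h2
      obtain ⟨a, b, hab, hNx⟩ := Set.ncard_eq_two.mp hx2
      by_cases hadjab : G.Adj a b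
      · exact caseC1 IH G hn h4 hout hδ2 hNx hab hadjab
      · exact caseA IH G hn h4 hout hδ2 hNx hab hadjab
    · push_neg at h2
      have hδ3 : ∀ v, 3 ≤ G.degN v := fun v => by
        have h1 := hδ2 v
        have h2' := h2 v
        omega
      exact caseC0 IH G hn h4 hout hδ3

/-- Every finite outerplanar simple graph with at least `4` vertices in
which every vertex has degree at least `2` contains two non-adjacent vertices each of
degree exactly `2`. -/
theorem outerplanar_two_nonadjacent_degree_two {V : Type} [Fintype V]
    (G : SimpleGraph V) (hcard : 4 ≤ Fintype.card V)
    (hout : G.IsOuterplanar) (hdeg : ∀ v, 2 ≤ G.degN v) :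
    ∃ u v, u ≠ v ∧ ¬ G.Adj u v ∧ G.degN u = 2 ∧ G.degN v = 2 := by
  obtain ⟨u, v, hne, hnadj, hu, hv⟩ :=
    master (Fintype.card V) V G rfl hcard hout
      (fun u v h1 _ => absurd h1 (by have := hdeg u; omega))
  exact ⟨u, v, hne, hnadj, le_antisymm hu (hdeg u), le_antisymm hv (hdeg v)⟩
end
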